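/- Let d ≥ 1 and let f and f̃ be sp-triangular homomorphisms of Λ with coefficient families m and m̃ respectively. If m_{(1^i),(1^j)} = m̃_{(1^i),(1^j)} for all i > j ≥ 0 with i − j < d, then m_{λμ} = m̃_{λμ} for every pair of partitions μ ≤ λ with |λ| − |μ| < d. -/

import Mathlib

open scoped BigOperators

noncomputable section

/-- The ring `Λ = ℝ[h₁, h₂, …]`: the variable `n : ℕ` represents `h_{n+1}`. -/
abbrev Lam : Type := MvPolynomial ℕ ℝ

/-- `H m` is the generator `h_m` of `Λ` for `m ≥ 1`, with the conventions `h_0 = 1`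
and `h_m = 0` for `m < 0`. -/
def H (m : ℤ) : Lam :=
  if 1 ≤ m then MvPolynomial.X (m.toNat - 1) else if m = 0 then 1 else 0

/-- A partition: an antitone, eventually-zero sequence of natural numbers;
`parts 0` is the first part `λ₁`. -/
structure Ptn where
  parts : ℕ → ℕ
  antitone' : ∀ ⦃i j : ℕ⦄, i ≤ j → parts j ≤ parts i
  eventually_zero : ∃ N, ∀ i, N ≤ i → parts i = 0

namespace Ptn

/-- The number of (nonzero) parts of a partition. -/
def len (μ : Ptn) : ℕ := sInf {N | ∀ i, N ≤ i → μ.parts i = 0}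

/-- The size `|μ| = μ₁ + μ₂ + ⋯` of a partition. -/
def size (μ : Ptn) : ℕ := ∑ᶠ i, μ.parts i

/-- Extended dominance order: `μ.dle lam` iff `μ₁ + ⋯ + μ_k ≤ lam₁ + ⋯ + lam_k` for all `k`. -/
def dle (μ lam : Ptn) : Prop :=
  ∀ k : ℕ, ∑ i ∈ Finset.range k, μ.parts i ≤ ∑ i ∈ Finset.range k, lam.parts i

end Ptn

/-- The Schur function `s_λ = det(h_{λ_i - i + j})_{1 ≤ i,j ≤ len λ}` in `Λ`. -/
def sF (lam : Ptn) : Lam :=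
  (Matrix.of fun i j : Fin lam.len => H ((lam.parts i.1 : ℤ) - i.1 + j.1)).det

/-- The symplectic universal character
`sp_λ = ½ · det(h_{λ_i - i + j} + h_{λ_i - i - j + 2})_{1 ≤ i,j ≤ len λ}`, with `sp_∅ = 1`. -/
def spF (lam : Ptn) : Lam :=
  if lam.len = 0 then 1 else
    (2⁻¹ : ℝ) • (Matrix.of fun i j : Fin lam.len =>
      H ((lam.parts i.1 : ℤ) - i.1 + j.1) + H ((lam.parts i.1 : ℤ) - i.1 - j.1)).det

/-- `f` is an sp-triangular homomorphism with coefficient family `m`: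
`m lam lam = 1`, `m lam mu = 0` unless `mu ≤ lam` in extended dominance order, and
`f(s_λ) = ∑_{μ} m_{λμ} sp_μ` for every partition `λ`. -/
def IsSpTriangular (f : Lam →ₐ[ℝ] Lam) (m : Ptn → Ptn → ℝ) : Prop :=
  (∀ lam, m lam lam = 1) ∧
  (∀ lam mu, m lam mu ≠ 0 → mu.dle lam) ∧
  (∀ lam, f (sF lam) = ∑ᶠ mu : Ptn, m lam mu • spF mu)

/-- The column partition `(1^i)`. -/
def colP (i : ℕ) : Ptn where
  parts := fun k => if k < i then 1 else 0
  antitone' := by intro k l hkl; split_ifs <;> omega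
  eventually_zero := ⟨i, fun k hk => by split_ifs <;> omega⟩

/-- The one-row partition `(k)`. -/
def rowP (k : ℕ) : Ptn where
  parts := fun i => if i = 0 then k else 0
  antitone' := by intro i j hij; split_ifs <;> omega
  eventually_zero := ⟨1, fun i hi => by split_ifs <;> omega⟩

/-- The rectangular partition `(k^d)`: `d` parts equal to `k`. -/
def rectP (k d : ℕ) : Ptn where
  parts := fun i => if i < d then k else 0
  antitone' := by intro i j hij; split_ifs <;> omega
  eventually_zero := ⟨d, fun i hi => by split_ifs <;> omega⟩

/-- The empty partition `∅`. -/
def emptyP : Ptn where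
  parts := fun _ => 0
  antitone' := by intro i j _; exact le_rfl
  eventually_zero := ⟨0, fun _ _ => rfl⟩

/-- The hook partition `(a, 1^b)`: one part `a ≥ 1` followed by `b` parts equal to `1`. -/
def hookP (a b : ℕ) (ha : 1 ≤ a) : Ptn where
  parts := fun i => if i = 0 then a else if i ≤ b then 1 else 0
  antitone' := by intro i j hij; split_ifs <;> omega
  eventually_zero := ⟨b + 1, fun i hi => by split_ifs <;> omega⟩

/-- The complement of `μ` in the `ℓ × m` rectangle, rotated by 180°:
its `i`-th part (0-indexed, `i < ℓ`) is `m - μ_{ℓ-i}`. -/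
def complP (ℓ m : ℕ) (μ : Ptn) : Ptn where
  parts := fun i => if i < ℓ then m - μ.parts (ℓ - 1 - i) else 0
  antitone' := by
    intro i j hij; split_ifs with hj hi
    · exact Nat.sub_le_sub_left (μ.antitone' (by omega)) m
    · omega
    · exact Nat.zero_le _
    · exact le_rfl
  eventually_zero := ⟨ℓ, fun i hi => by split_ifs <;> omega⟩

open Classical in
/-- The complete homogeneous symmetric power series of degree `m` in the variables from `S`:
the sum of all monomials of degree `m` supported on `S`; it is `1` for `m = 0` and `0` for
`m < 0`. -/
def hOn {σ : Type} (S : Set σ) (m : ℤ) : MvPowerSeries σ ℝ :=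
  fun d => if 0 ≤ m ∧ ((d.sum fun _ e => e : ℕ) : ℤ) = m ∧ (↑d.support : Set σ) ⊆ S then 1 else 0

open Classical in
/-- `p(x_v)`: the one-variable power series with coefficient sequence `a`, evaluated at the
variable `v`. -/
def pAt {σ : Type} (a : ℕ → ℝ) (v : σ) : MvPowerSeries σ ℝ :=
  fun d => if (↑d.support : Set σ) ⊆ ({v} : Set σ) then a (d v) else 0

/-- The degree-`N` homogeneous component of a multivariate power series. -/
def homComp {σ : Type} (N : ℕ) (F : MvPowerSeries σ ℝ) : MvPowerSeries σ ℝ :=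
  fun d => if (d.sum fun _ e => e) = N then MvPowerSeries.coeff d F else 0

/-- `∏_{1 ≤ i < j ≤ n} (1 - x_i x_j)` in `ℝ[[x_1, …, x_n]]`. -/
def kappaDen (n : ℕ) : MvPowerSeries (Fin n) ℝ :=
  ∏ q ∈ Finset.univ.filter (fun q : Fin n × Fin n => q.1 < q.2),
    (1 - MvPowerSeries.X q.1 * MvPowerSeries.X q.2)

/-- `κ_p^{(n)} = ∏_{i=1}^n p(x_i) / ∏_{1 ≤ i < j ≤ n} (1 - x_i x_j)` in `ℝ[[x_1, …, x_n]]`,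
where `a` is the coefficient sequence of `p`. -/
def kappaN (a : ℕ → ℝ) (n : ℕ) : MvPowerSeries (Fin n) ℝ :=
  (∏ i : Fin n, pAt a i) * MvPowerSeries.invOfUnit (kappaDen n) 1

/-- The Schur polynomial `s_μ(x_1, …, x_n) = det(h_{μ_i - i + j}(x_1, …, x_n))_{1 ≤ i,j ≤ n}`
as a power series in `ℝ[[x_1, …, x_n]]`. -/
def schurPow (n : ℕ) (p : ℕ → ℕ) : MvPowerSeries (Fin n) ℝ :=
  (Matrix.of fun i j : Fin n => hOn (Set.univ : Set (Fin n)) ((p i.1 : ℤ) - i.1 + j.1)).det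

/-- `c` is the family of coefficients expressing the degree-`n` homogeneous component of `F`
in the basis of Schur polynomials `{s_μ(x_1, …, x_n) : |μ| = n}`. -/
def SchurExpansion (n : ℕ) (F : MvPowerSeries (Fin n) ℝ) (c : Ptn → ℝ) : Prop :=
  homComp n F = ∑ᶠ (μ : Ptn) (_ : μ.size = n), c μ • schurPow n μ.parts

/-- `x = ⟨κ_p, s_ν⟩`: the coefficient of `s_ν(x_1, …, x_n)` (`n = |ν|`) in the Schur-basis
expansion of the degree-`n` homogeneous component of `κ_p^{(n)}`. -/
def KappaCoeff (a : ℕ → ℝ) (ν : Ptn) (x : ℝ) : Prop :=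
  ∃ c : Ptn → ℝ, SchurExpansion ν.size (kappaN a ν.size) c ∧ c ν = x

/-- The power series `p` with coefficient sequence `a` is κ-positive:
`⟨κ_p, s_ν⟩ ≥ 0` for every (nonempty) partition `ν`. -/
def KappaPositive (a : ℕ → ℝ) : Prop :=
  ∀ ν : Ptn, ν.len ≠ 0 → ∀ x : ℝ, KappaCoeff a ν x → 0 ≤ x

/-- `g_m(y) = ∑_{k=0}^m a_k h_{m-k}(y)` in the variables from `S` (`0` for `m < 0`). -/
def gY {σ : Type} (a : ℕ → ℝ) (S : Set σ) (m : ℤ) : MvPowerSeries σ ℝ :=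
  if m < 0 then 0 else ∑ k ∈ Finset.range (m.toNat + 1), a k • hOn S (m - k)

end

noncomputable section
open MvPolynomial Finset
namespace S7


def W (m : ℕ →₀ ℕ) : ℕ := m.sum fun n e => (n + 1) * e

lemma W_add (a b : ℕ →₀ ℕ) : W (a + b) = W a + W b :=
  Finsupp.sum_add_index' (fun _ => by simp) (fun _ b c => by ring)

lemma W_zero : W 0 = 0 := by simp [W]

lemma W_single (n e : ℕ) : W (Finsupp.single n e) = (n+1)*e :=
  Finsupp.sum_single_index (by simp)

def Mdeg (c : ℤ) (P : Lam) : Prop := ∀ m ∈ P.support, (W m : ℤ) ≤ c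

lemma Mdeg.mono {c c' : ℤ} (h : c ≤ c') {P : Lam} (hP : Mdeg c P) : Mdeg c' P :=
  fun m hm => (hP m hm).trans h

lemma Mdeg_zero (c : ℤ) : Mdeg c (0 : Lam) := by simp [Mdeg]

lemma Mdeg_monomial {c : ℤ} {m : ℕ →₀ ℕ} (h : (W m : ℤ) ≤ c) (r : ℝ) :
    Mdeg c (monomial m r) := by
  intro m' hm'
  have := support_monomial_subset (σ := ℕ) (R := ℝ) (s := m) (a := r) hm'
  simp only [Finset.mem_singleton] at this
  subst this; exact h

lemma Mdeg_one {c : ℤ} (h : 0 ≤ c) : Mdeg c (1 : Lam) := by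
  have : (1 : Lam) = monomial 0 1 := by simp
  rw [this]
  exact Mdeg_monomial (by simpa [W_zero]) 1

lemma Mdeg_add {c : ℤ} {P Q : Lam} (hP : Mdeg c P) (hQ : Mdeg c Q) : Mdeg c (P + Q) := by
  intro m hm
  rcases Finset.mem_union.1 (support_add hm) with h | h
  exacts [hP m h, hQ m h]

lemma Mdeg_neg {c : ℤ} {P : Lam} (hP : Mdeg c P) : Mdeg c (-P) := by
  intro m hm; exact hP m (by simpa [support_neg] using hm)

lemma Mdeg_sub {c : ℤ} {P Q : Lam} (hP : Mdeg c P) (hQ : Mdeg c Q) : Mdeg c (P - Q) := by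
  rw [sub_eq_add_neg]; exact Mdeg_add hP (Mdeg_neg hQ)

lemma Mdeg_smul {c : ℤ} {P : Lam} (r : ℝ) (hP : Mdeg c P) : Mdeg c (r • P) := by
  intro m hm
  exact hP m (Finsupp.support_smul hm)

lemma Mdeg_sum {c : ℤ} {ι : Type*} (s : Finset ι) (g : ι → Lam)
    (h : ∀ i ∈ s, Mdeg c (g i)) : Mdeg c (∑ i ∈ s, g i) := by
  classical
  induction s using Finset.induction_on with
  | empty => simpa using Mdeg_zero c
  | insert a s hni ih =>
      rw [Finset.sum_insert hni]
      exact Mdeg_add (h a (Finset.mem_insert_self a s))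
        (ih fun i hi => h i (Finset.mem_insert_of_mem hi))

lemma Mdeg_mul {a b : ℤ} {P Q : Lam} (hP : Mdeg a P) (hQ : Mdeg b Q) :
    Mdeg (a + b) (P * Q) := by
  intro m hm
  obtain ⟨m1, hm1, m2, hm2, rfl⟩ := Finset.mem_add.1 (support_mul P Q hm)
  rw [W_add]
  push_cast
  exact add_le_add (hP m1 hm1) (hQ m2 hm2)

lemma coeff_eq_zero_of_Mdeg {c : ℤ} {P : Lam} (hP : Mdeg c P) {m : ℕ →₀ ℕ}
    (h : c < (W m : ℤ)) : coeff m P = 0 := by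
  by_contra hne
  exact absurd (hP m (mem_support_iff.2 hne)) (not_le.2 h)

-- ### H as monomial
noncomputable def hsing (k : ℤ) : ℕ →₀ ℕ :=
  if 1 ≤ k then Finsupp.single (k.toNat - 1) 1 else 0

lemma H_neg {k : ℤ} (h : k < 0) : H k = 0 := by
  rw [H, if_neg (by omega), if_neg (by omega)]

lemma H_eq_monomial {k : ℤ} (h : 0 ≤ k) : H k = monomial (hsing k) 1 := by
  rcases lt_or_ge k 1 with h1 | h1
  · have : k = 0 := by omega
    subst this
    simp [H, hsing]
  · rw [H, if_pos h1, hsing, if_pos h1, X, monomial_eq_monomial_iff]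
    left; exact ⟨rfl, rfl⟩

lemma W_hsing {k : ℤ} (h : 0 ≤ k) : (W (hsing k) : ℤ) = k := by
  rcases lt_or_ge k 1 with h1 | h1
  · have : k = 0 := by omega
    subst this; simp [hsing, W_zero]
  · rw [hsing, if_pos h1, W_single]
    have : 1 ≤ k.toNat := by omega
    omega

def Phi (k : ℕ) (m : ℕ →₀ ℕ) : ℕ := m.sum fun n e => e * min (n+1) k

lemma Phi_add (k : ℕ) (a b : ℕ →₀ ℕ) : Phi k (a + b) = Phi k a + Phi k b :=
  Finsupp.sum_add_index' (fun _ => by simp) (fun _ b c => by ring)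

lemma Phi_zero (k : ℕ) : Phi k 0 = 0 := by simp [Phi]

lemma Phi_single (k n e : ℕ) : Phi k (Finsupp.single n e) = e * min (n+1) k :=
  Finsupp.sum_single_index (by simp)

lemma Phi_hsing (k : ℕ) {c : ℤ} (h : 0 ≤ c) : Phi k (hsing c) = min c.toNat k := by
  rcases lt_or_ge c 1 with h1 | h1
  · have : c = 0 := by omega
    subst this; simp [hsing, Phi_zero]
  · rw [hsing, if_pos h1, Phi_single]
    have : 1 ≤ c.toNat := by omega
    omega

lemma Phi_sum (k : ℕ) {ι : Type*} (s : Finset ι) (g : ι → (ℕ →₀ ℕ)) :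
    Phi k (∑ i ∈ s, g i) = ∑ i ∈ s, Phi k (g i) := by
  classical
  induction s using Finset.induction_on with
  | empty => simp [Phi_zero]
  | insert a s hni ih => rw [Finset.sum_insert hni, Phi_add, ih, Finset.sum_insert hni]

lemma W_sum {ι : Type*} (s : Finset ι) (g : ι → (ℕ →₀ ℕ)) :
    W (∑ i ∈ s, g i) = ∑ i ∈ s, W (g i) := by
  classical
  induction s using Finset.induction_on with
  | empty => simp [W_zero]
  | insert a s hni ih => rw [Finset.sum_insert hni, W_add, ih, Finset.sum_insert hni]

-- ### products of H
noncomputable def MofF {r : ℕ} (c : Fin r → ℤ) : ℕ →₀ ℕ := ∑ i, hsing (c i)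

lemma prod_H_eq {r : ℕ} (c : Fin r → ℤ) (hc : ∀ i, 0 ≤ c i) :
    ∏ i, H (c i) = monomial (MofF c) 1 := by
  classical
  rw [MofF]
  induction (Finset.univ : Finset (Fin r)) using Finset.induction_on with
  | empty => simp
  | insert a s hni ih =>
      rw [Finset.prod_insert hni, Finset.sum_insert hni, ih, H_eq_monomial (hc a),
        monomial_mul, one_mul]

lemma W_MofF {r : ℕ} (c : Fin r → ℤ) (hc : ∀ i, 0 ≤ c i) :
    (W (MofF c) : ℤ) = ∑ i, c i := by
  rw [MofF, W_sum]
  push_cast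
  exact Finset.sum_congr rfl fun i _ => W_hsing (hc i)

lemma Phi_MofF {r : ℕ} (k : ℕ) (c : Fin r → ℤ) (hc : ∀ i, 0 ≤ c i) :
    Phi k (MofF c) = ∑ i, min (c i).toNat k := by
  rw [MofF, Phi_sum]
  exact Finset.sum_congr rfl fun i _ => Phi_hsing k (hc i)



-- ### products of H over Finsets, Mdeg bounds
lemma prod_H_zero {ι : Type*} {s : Finset ι} (c : ι → ℤ) {i : ι} (hi : i ∈ s) (h : c i < 0) :
    ∏ j ∈ s, H (c j) = 0 :=
  Finset.prod_eq_zero hi (H_neg h)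

lemma prod_H_eqF {ι : Type*} (s : Finset ι) (c : ι → ℤ) (hc : ∀ i ∈ s, 0 ≤ c i) :
    ∏ i ∈ s, H (c i) = monomial (∑ i ∈ s, hsing (c i)) 1 := by
  classical
  induction s using Finset.induction_on with
  | empty => simp
  | insert a s hni ih =>
      rw [Finset.prod_insert hni, Finset.sum_insert hni,
        ih (fun i hi => hc i (Finset.mem_insert_of_mem hi)),
        H_eq_monomial (hc a (Finset.mem_insert_self a s)), monomial_mul, one_mul]

lemma Mdeg_prod_H {ι : Type*} (s : Finset ι) (c : ι → ℤ) :
    Mdeg (∑ i ∈ s, c i) (∏ i ∈ s, H (c i)) := by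
  classical
  by_cases hc : ∀ i ∈ s, 0 ≤ c i
  · rw [prod_H_eqF s c hc]
    refine Mdeg_monomial ?_ 1
    rw [W_sum]
    push_cast
    exact le_of_eq (Finset.sum_congr rfl fun i hi => W_hsing (hc i hi))
  · push_neg at hc
    obtain ⟨i, hi, hneg⟩ := hc
    rw [prod_H_zero c hi (by omega)]
    exact Mdeg_zero _

-- ### determinant expansion
lemma det_eq_sum_perm {r : ℕ} (M : Matrix (Fin r) (Fin r) Lam) :
    M.det = ∑ σ : Equiv.Perm (Fin r), (Equiv.Perm.sign σ : ℤ) • ∏ i, M i (σ i) := by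
  rw [← Matrix.det_transpose M, Matrix.det_apply]
  exact Finset.sum_congr rfl fun σ _ => by
    congr 1

lemma sum_perm_eq {r : ℕ} (σ : Equiv.Perm (Fin r)) (g : Fin r → ℤ) :
    ∑ i, g (σ i) = ∑ i, g i := Equiv.sum_comp σ g

/-- determinant of the `H (a i + j)` matrix -/
noncomputable def detH {r : ℕ} (a : Fin r → ℤ) : Lam :=
  (Matrix.of fun i j : Fin r => H (a i + j)).det

lemma detH_eq {r : ℕ} (a : Fin r → ℤ) :
    detH a = ∑ σ : Equiv.Perm (Fin r), (Equiv.Perm.sign σ : ℤ) • ∏ i, H (a i + σ i) :=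
  det_eq_sum_perm _

lemma Mdeg_zsmul {c : ℤ} {P : Lam} (n : ℤ) (hP : Mdeg c P) : Mdeg c (n • P) := by
  have : (n : ℤ) • P = (n : ℝ) • P := by
    rw [Int.cast_smul_eq_zsmul]
  rw [this]
  exact Mdeg_smul _ hP

lemma Mdeg_detH {r : ℕ} (a : Fin r → ℤ) : Mdeg (∑ i, (a i + i)) (detH a) := by
  rw [detH_eq]
  refine Mdeg_sum _ _ fun σ _ => Mdeg_zsmul _ ?_
  have h1 : Mdeg (∑ i, (a i + σ i)) (∏ i, H (a i + (σ i : ℤ))) := Mdeg_prod_H _ _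
  refine h1.mono (le_of_eq ?_)
  have : ∑ i, (((σ i : ℕ) : ℤ)) = ∑ i : Fin r, ((i : ℕ) : ℤ) :=
    sum_perm_eq σ (fun i => ((i : ℕ) : ℤ))
  rw [Finset.sum_add_distrib, Finset.sum_add_distrib, this]

/-- determinant of the symplectic matrix -/
noncomputable def spdetH {r : ℕ} (a : Fin r → ℤ) : Lam :=
  (Matrix.of fun i j : Fin r => H (a i + j) + H (a i - j)).det

lemma spdetH_sub {r : ℕ} (hr : 0 < r) (a : Fin r → ℤ) :
    Mdeg (∑ i, (a i + i) - 2) (spdetH a - (2 : ℝ) • detH a) := by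
  classical
  have : Nonempty (Fin r) := ⟨⟨0, hr⟩⟩
  rw [spdetH, det_eq_sum_perm, detH_eq]
  rw [Finset.smul_sum, ← Finset.sum_sub_distrib]
  refine Mdeg_sum _ _ fun σ _ => ?_
  -- expand the product
  have hexp : (∏ i, (H (a i + σ i) + H (a i - σ i))) =
      ∑ t ∈ (Finset.univ : Finset (Fin r)).powerset,
        (∏ i ∈ t, H (a i + σ i)) * ∏ i ∈ Finset.univ \ t, H (a i - σ i) :=
    Finset.prod_add _ _ _
  set i0 : Fin r := σ.symm ⟨0, hr⟩ with hi0
  set u : Finset (Fin r) := Finset.univ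
  set F : Finset (Fin r) → Lam :=
    fun t => (∏ i ∈ t, H (a i + σ i)) * ∏ i ∈ u \ t, H (a i - σ i) with hF
  have hσi0 : (σ i0 : ℤ) = 0 := by simp [hi0]
  have hFu : F u = ∏ i, H (a i + σ i) := by simp [hF, u]
  have hFu0 : F (u.erase i0) = ∏ i, H (a i + σ i) := by
    simp only [hF]
    have hdiff : u \ u.erase i0 = {i0} := by
      ext x
      simp [u, Finset.mem_erase, Finset.mem_sdiff]
    rw [hdiff, Finset.prod_singleton]
    have heq : H (a i0 - σ i0) = H (a i0 + σ i0) := by rw [hσi0]; ring_nf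
    rw [heq]
    exact Finset.prod_erase_mul u (fun i => H (a i + ((σ i : ℕ) : ℤ))) (Finset.mem_univ i0)
  have hmem_u : u ∈ u.powerset := Finset.mem_powerset_self u
  have hmem_e : u.erase i0 ∈ u.powerset.erase u := by
    refine Finset.mem_erase.2 ⟨?_, Finset.mem_powerset.2 (Finset.erase_subset _ _)⟩
    intro hcontra
    have h2 : i0 ∈ u := Finset.mem_univ i0
    rw [← hcontra] at h2
    exact Finset.notMem_erase _ _ h2
  have hsplit : ∑ t ∈ u.powerset, F t =
      F u + (F (u.erase i0) + ∑ t ∈ (u.powerset.erase u).erase (u.erase i0), F t) := by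
    rw [← Finset.add_sum_erase _ F hmem_u, ← Finset.add_sum_erase _ F hmem_e]
  have hrest : ∀ t ∈ (u.powerset.erase u).erase (u.erase i0),
      Mdeg (∑ i, (a i + i) - 2) (F t) := by
    intro t ht
    obtain ⟨htne0, ht'⟩ := Finset.mem_erase.1 ht
    obtain ⟨htne, htsub⟩ := Finset.mem_erase.1 ht'
    -- there is i ∈ u \ t with σ i ≠ 0
    have hne : ∃ i ∈ u \ t, (σ i : ℤ) ≠ 0 := by
      by_contra hcon
      push_neg at hcon
      -- then u \ t ⊆ {i0}
      have hsub1 : u \ t ⊆ {i0} := by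
        intro x hx
        have hval : ((σ x : ℕ) : ℤ) = 0 := hcon x hx
        have hval2 : (σ x : ℕ) = 0 := by exact_mod_cast hval
        have hx0 : σ x = ⟨0, hr⟩ := Fin.ext (by simp [hval2])
        simp only [Finset.mem_singleton, hi0]
        rw [← hx0]
        simp
      have hne2 : (u \ t).Nonempty := by
        rw [Finset.sdiff_nonempty]
        intro hcontra
        exact htne (Finset.Subset.antisymm (Finset.mem_powerset.1 htsub) hcontra |>.symm ▸ rfl)
      have hut : u \ t = {i0} := Finset.Subset.antisymm hsub1 (by
        obtain ⟨x, hx⟩ := hne2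
        have hxi : x = i0 := Finset.mem_singleton.1 (hsub1 hx)
        intro y hy
        simp only [Finset.mem_singleton] at hy
        exact hy ▸ (hxi ▸ hx))
      apply htne0
      ext x
      simp only [Finset.mem_erase]
      constructor
      · intro hxt
        refine ⟨?_, Finset.mem_univ x⟩
        intro hxeq
        have hmem : x ∈ u \ t := hut ▸ (Finset.mem_singleton.2 hxeq)
        exact (Finset.mem_sdiff.1 hmem).2 hxt
      · rintro ⟨hxne, -⟩
        by_contra hxt
        have hmem : x ∈ u \ t := Finset.mem_sdiff.2 ⟨Finset.mem_univ x, hxt⟩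
        exact hxne (Finset.mem_singleton.1 (hut ▸ hmem))
    obtain ⟨iw, hiw, hiwne⟩ := hne
    have h1 : Mdeg ((∑ i ∈ t, (a i + σ i)) + ∑ i ∈ u \ t, (a i - σ i)) (F t) :=
      Mdeg_mul (Mdeg_prod_H _ _) (Mdeg_prod_H _ _)
    refine h1.mono ?_
    have hcompl : u \ t = tᶜ := by
      ext x; simp [Finset.mem_compl, Finset.mem_sdiff, u]
    have hsplit2 : ∑ i ∈ t, (a i + (σ i : ℤ)) + ∑ i ∈ u \ t, (a i - σ i)
        = ∑ i, (a i + σ i) - 2 * ∑ i ∈ u \ t, (σ i : ℤ) := by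
      rw [hcompl, ← Finset.sum_add_sum_compl t (fun i => (a i + (σ i : ℤ)))]
      simp only [Finset.sum_add_distrib, Finset.sum_sub_distrib]
      ring
    rw [hsplit2]
    have hs1 : ∑ i, (a i + (σ i : ℤ)) = ∑ i, (a i + i) := by
      rw [Finset.sum_add_distrib, Finset.sum_add_distrib, sum_perm_eq σ (fun i => (i : ℤ))]
    rw [hs1]
    have hs2 : (1 : ℤ) ≤ ∑ i ∈ u \ t, (σ i : ℤ) := by
      have hnn : ∀ i ∈ u \ t, (0 : ℤ) ≤ (σ i : ℤ) := fun i _ => by positivity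
      calc (1 : ℤ) ≤ (σ iw : ℤ) := by omega
      _ ≤ ∑ i ∈ u \ t, (σ i : ℤ) := Finset.single_le_sum hnn hiw
    omega
  simp only [Matrix.of_apply]
  rw [hexp, hsplit, hFu0, hFu]
  have hcalc : (Equiv.Perm.sign σ : ℤ) •
        ((∏ i, H (a i + σ i)) + ((∏ i, H (a i + σ i)) +
          ∑ t ∈ (u.powerset.erase u).erase (u.erase i0), F t))
      - (2:ℝ) • (Equiv.Perm.sign σ : ℤ) • (∏ i, H (a i + σ i))
      = (Equiv.Perm.sign σ : ℤ) • ∑ t ∈ (u.powerset.erase u).erase (u.erase i0), F t := by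
    rcases Int.units_eq_one_or (Equiv.Perm.sign σ) with hs | hs <;>
      simp [hs] <;> module
  rw [hcalc]
  exact Mdeg_zsmul _ (Mdeg_sum _ _ hrest)


open Finset

/-- sum of a finset of naturals is at least `0+1+...+(card-1)` -/
lemma sum_distinct_ge (B : Finset ℕ) : ∑ j ∈ range B.card, j ≤ ∑ b ∈ B, b := by
  classical
  generalize hn : B.card = n
  induction n generalizing B with
  | zero => simp
  | succ n ih =>
      have hne : B.Nonempty := by
        rw [← Finset.card_pos, hn]; omega
      set b := B.max' hne with hb
      have hmem : b ∈ B := B.max'_mem hne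
      have hcard : (B.erase b).card = n := by rw [Finset.card_erase_of_mem hmem, hn]; omega
      have hsub : B ⊆ range (b+1) := fun x hx => Finset.mem_range.2 (by
        have := B.le_max' x hx; omega)
      have hble : n ≤ b := by
        have := Finset.card_le_card hsub
        rw [hn, Finset.card_range] at this; omega
      calc ∑ j ∈ range (n+1), j = (∑ j ∈ range n, j) + n := by rw [Finset.sum_range_succ]
      _ ≤ (∑ x ∈ B.erase b, x) + b := add_le_add (ih _ hcard) hble
      _ = ∑ x ∈ B, x := Finset.sum_erase_add B _ hmem

variable {r : ℕ}

/-- the finset of `i : Fin r` with `i < t` -/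
def Ffin (r t : ℕ) : Finset (Fin r) := Finset.univ.filter (fun i => (i : ℕ) < t)

lemma mem_Ffin {t : ℕ} {i : Fin r} : i ∈ Ffin r t ↔ (i : ℕ) < t := by
  simp [Ffin]

lemma Ffin_top {t : ℕ} (h : r ≤ t) : Ffin r t = Finset.univ := by
  ext i; simp [mem_Ffin]; omega

lemma Ffin_subset {t t' : ℕ} (h : t ≤ t') : Ffin r t ⊆ Ffin r t' := by
  intro i hi; rw [mem_Ffin] at *; omega

lemma image_Ffin (t : ℕ) : (Ffin r t).image (fun i : Fin r => (i : ℕ)) = range (min t r) := by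
  ext j
  simp only [Finset.mem_image, mem_Ffin, Finset.mem_range]
  constructor
  · rintro ⟨i, hi, rfl⟩; exact lt_min hi i.2
  · intro hj
    exact ⟨⟨j, lt_of_lt_of_le hj (min_le_right t r)⟩, lt_of_lt_of_le hj (min_le_left t r), rfl⟩

lemma card_Ffin (t : ℕ) : (Ffin r t).card = min t r := by
  have h1 := image_Ffin (r := r) t
  have h2 : ((Ffin r t).image (fun i : Fin r => (i : ℕ))).card = (Ffin r t).card :=
    Finset.card_image_of_injective _ Fin.val_injective
  rw [h1, Finset.card_range] at h2
  omega

lemma sum_Ffin_val (t : ℕ) (g : ℕ → ℕ) :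
    ∑ i ∈ Ffin r t, g (i : ℕ) = ∑ j ∈ range (min t r), g j := by
  rw [← image_Ffin]
  rw [Finset.sum_image (fun a _ b _ h => Fin.val_injective h)]

/-- prefix sums of permuted indices dominate `0+1+⋯` -/
lemma perm_prefix (σ : Equiv.Perm (Fin r)) (t : ℕ) :
    ∑ i ∈ Ffin r t, (i : ℕ) ≤ ∑ i ∈ Ffin r t, ((σ i : Fin r) : ℕ) := by
  classical
  set B := (Ffin r t).image (fun i => ((σ i : Fin r) : ℕ)) with hB
  have hinj : ∀ a ∈ Ffin r t, ∀ b ∈ Ffin r t,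
      ((σ a : Fin r) : ℕ) = ((σ b : Fin r) : ℕ) → a = b :=
    fun a _ b _ h => σ.injective (Fin.val_injective h)
  have hcard : B.card = (Ffin r t).card := Finset.card_image_of_injOn hinj
  have hsum : ∑ b ∈ B, b = ∑ i ∈ Ffin r t, ((σ i : Fin r) : ℕ) := by
    rw [hB]; exact Finset.sum_image hinj
  have h1 : ∑ i ∈ Ffin r t, (i : ℕ) = ∑ j ∈ range (min t r), j := sum_Ffin_val t id
  have hc2 : min t r = B.card := by rw [hcard, card_Ffin]
  rw [h1, ← hsum, hc2]
  exact sum_distinct_ge B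

lemma downward_closed_eq_range (S : Finset ℕ) (h : ∀ j j', j ≤ j' → j' ∈ S → j ∈ S) :
    S = range S.card := by
  ext j
  simp only [Finset.mem_range]
  constructor
  · intro hj
    have hsub : range (j+1) ⊆ S := fun x hx => h x j (by simp at hx; omega) hj
    have := Finset.card_le_card hsub
    rw [Finset.card_range] at this; omega
  · intro hj
    by_contra hjS
    have hsub : S ⊆ range j := by
      intro x hx
      simp only [Finset.mem_range]
      by_contra hxj
      exact hjS (h j x (by omega) hx)
    have := Finset.card_le_card hsub
    rw [Finset.card_range] at this; omega

section core

variable {r : ℕ} {ν : ℕ → ℕ} {σ : Equiv.Perm (Fin r)} {c' : Fin r → ℕ}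

lemma sum_univ_eq_Ffin (g : Fin r → ℤ) : ∑ i, g i = ∑ i ∈ Ffin r r, g i := by
  rw [Ffin_top (le_refl r)]

lemma claimA (hc : ∀ i : Fin r, (c' i : ℤ) = (ν i : ℤ) - i + σ i) (t : ℕ) :
    ∑ j ∈ range (min t r), (ν j : ℤ) ≤ ∑ i ∈ Ffin r t, (c' i : ℤ) := by
  have h1 : ∑ i ∈ Ffin r t, (c' i : ℤ)
      = ∑ i ∈ Ffin r t, ((ν i : ℤ)) - ∑ i ∈ Ffin r t, ((i:ℕ) : ℤ)
        + ∑ i ∈ Ffin r t, ((σ i : ℕ) : ℤ) := by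
    calc ∑ i ∈ Ffin r t, (c' i : ℤ)
        = ∑ i ∈ Ffin r t, ((ν i : ℤ) - i + σ i) := Finset.sum_congr rfl (fun i _ => hc i)
    _ = _ := by rw [Finset.sum_add_distrib, Finset.sum_sub_distrib]
  have h2 : ∑ i ∈ Ffin r t, ((ν (i : ℕ)) : ℤ) = ∑ j ∈ range (min t r), (ν j : ℤ) := by
    exact_mod_cast congrArg (fun n : ℕ => (n : ℤ)) (sum_Ffin_val (r := r) t ν)
  have h3 : ∑ i ∈ Ffin r t, ((i:ℕ) : ℤ) ≤ ∑ i ∈ Ffin r t, ((σ i : ℕ) : ℤ) := by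
    exact_mod_cast perm_prefix σ t
  linarith

lemma total_eq (hc : ∀ i : Fin r, (c' i : ℤ) = (ν i : ℤ) - i + σ i) :
    ∑ i, (c' i : ℤ) = ∑ j ∈ range r, (ν j : ℤ) := by
  have h1 : ∑ i, (c' i : ℤ) = ∑ i : Fin r, ((ν (i:ℕ) : ℤ)) - ∑ i : Fin r, ((i:ℕ) : ℤ)
        + ∑ i : Fin r, ((σ i : ℕ) : ℤ) := by
    calc ∑ i, (c' i : ℤ)
        = ∑ i : Fin r, ((ν (i:ℕ) : ℤ) - (i:ℕ) + ((σ i : ℕ) : ℤ)) :=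
          Finset.sum_congr rfl (fun i _ => hc i)
    _ = _ := by rw [Finset.sum_add_distrib, Finset.sum_sub_distrib]
  have h2 : ∑ i : Fin r, ((ν (i : ℕ)) : ℤ) = ∑ j ∈ range r, (ν j : ℤ) := by
    rw [sum_univ_eq_Ffin (fun i => ((ν (i:ℕ)) : ℤ))]
    have h4 := sum_Ffin_val (r := r) r ν
    rw [min_self] at h4
    exact_mod_cast congrArg (fun n : ℕ => (n : ℤ)) h4
  have h3 : ∑ i : Fin r, ((σ i : ℕ) : ℤ) = ∑ i : Fin r, ((i:ℕ) : ℤ) :=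
    Equiv.sum_comp σ (fun i : Fin r => ((i : ℕ) : ℤ))
  linarith

/-- the filter of indices with large `ν` is an initial range -/
lemma filter_gt_eq_range (hν : Antitone ν) (k : ℕ) :
    (range r).filter (fun j => k < ν j) = range (((range r).filter (fun j => k < ν j)).card) := by
  apply downward_closed_eq_range
  intro j j' hjj' hj'
  simp only [Finset.mem_filter, Finset.mem_range] at *
  exact ⟨by omega, lt_of_lt_of_le hj'.2 (hν hjj')⟩

lemma tk_le (hν : Antitone ν) (k : ℕ) :
    ((range r).filter (fun j => k < ν j)).card ≤ r := by
  calc _ ≤ (range r).card := Finset.card_le_card (Finset.filter_subset _ _)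
  _ = r := Finset.card_range r

lemma mem_tk (hν : Antitone ν) (k : ℕ) {j : ℕ} (hj : j < r) :
    j < ((range r).filter (fun j => k < ν j)).card ↔ k < ν j := by
  constructor
  · intro h
    have : j ∈ range (((range r).filter (fun j => k < ν j)).card) := Finset.mem_range.2 h
    rw [← filter_gt_eq_range hν] at this
    exact (Finset.mem_filter.1 this).2
  · intro h
    have : j ∈ (range r).filter (fun j => k < ν j) :=
      Finset.mem_filter.2 ⟨Finset.mem_range.2 hj, h⟩
    rw [filter_gt_eq_range hν] at this
    exact Finset.mem_range.1 this

/-- RHS computation: `t_k·k + (Σν - Σ_{<t_k}ν) = Σ min(ν,k)` -/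
lemma rhs_min_eq (hν : Antitone ν) (k : ℕ) :
    (((range r).filter (fun j => k < ν j)).card : ℤ) * k
      + (∑ j ∈ range r, (ν j : ℤ) - ∑ j ∈ range (((range r).filter (fun j => k < ν j)).card), (ν j : ℤ))
    = ∑ j ∈ range r, (min (ν j) k : ℤ) := by
  set t := ((range r).filter (fun j => k < ν j)).card with ht
  have htr : t ≤ r := tk_le hν k
  have hsub : range t ⊆ range r := by intro x hx; simp at *; omega
  have hsplit : ∑ j ∈ range r, (min (ν j) k : ℤ)
      = ∑ j ∈ range t, (min (ν j) k : ℤ) + ∑ j ∈ range r \ range t, (min (ν j) k : ℤ) := by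
    rw [Finset.sum_sdiff_eq_sub hsub]; ring
  have h1 : ∀ j ∈ range t, (min (ν j) k : ℤ) = k := by
    intro j hj
    have hjr : j < r := by simp at hj; omega
    have hlt := (mem_tk hν k hjr).1 (Finset.mem_range.1 hj)
    have h2' : (k : ℤ) ≤ (ν j : ℤ) := by exact_mod_cast le_of_lt hlt
    exact min_eq_right h2' 
  have h2 : ∀ j ∈ range r \ range t, (min (ν j) k : ℤ) = ν j := by
    intro j hj
    simp only [Finset.mem_sdiff, Finset.mem_range] at hj
    have hnk : ¬ k < ν j := fun hcon => (by omega : ¬ j < t) ((mem_tk hν k hj.1).2 hcon)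
    have h2' : (ν j : ℤ) ≤ (k : ℤ) := by exact_mod_cast (by omega : ν j ≤ k)
    exact min_eq_left h2' 
  rw [hsplit, Finset.sum_congr rfl h1, Finset.sum_congr rfl h2,
    Finset.sum_sdiff_eq_sub hsub, Finset.sum_const, Finset.card_range]
  push_cast
  ring

/-- C2: dominance bound for the min-sums -/
lemma minsum_le (hν : Antitone ν) (hc : ∀ i : Fin r, (c' i : ℤ) = (ν i : ℤ) - i + σ i)
    (k : ℕ) :
    ∑ i, (min (c' i) k : ℤ) ≤ ∑ j ∈ range r, (min (ν j) k : ℤ) := by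
  classical
  set t := ((range r).filter (fun j => k < ν j)).card with ht
  have htr : t ≤ r := tk_le hν k
  have hmin : min t r = t := min_eq_left htr
  have hsplitc : ∑ i, (min (c' i) k : ℤ)
      = ∑ i ∈ Ffin r t, (min (c' i) k : ℤ)
        + ∑ i ∈ Finset.univ.filter (fun i : Fin r => ¬ ((i:ℕ) < t)), (min (c' i) k : ℤ) :=
    (Finset.sum_filter_add_sum_filter_not Finset.univ _ _).symm
  have hsplitc' : ∑ i, (c' i : ℤ)
      = ∑ i ∈ Ffin r t, (c' i : ℤ)
        + ∑ i ∈ Finset.univ.filter (fun i : Fin r => ¬ ((i:ℕ) < t)), (c' i : ℤ) :=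
    (Finset.sum_filter_add_sum_filter_not Finset.univ _ _).symm
  have hb1 : ∑ i ∈ Ffin r t, (min (c' i) k : ℤ) ≤ (t : ℤ) * k := by
    calc ∑ i ∈ Ffin r t, (min (c' i) k : ℤ) ≤ ∑ _i ∈ Ffin r t, (k : ℤ) :=
      Finset.sum_le_sum (fun i _ => by exact_mod_cast Nat.min_le_right _ _)
    _ = (t : ℤ) * k := by rw [Finset.sum_const, card_Ffin, hmin]; push_cast; ring
  have hb2 : ∑ i ∈ Finset.univ.filter (fun i : Fin r => ¬ ((i:ℕ) < t)), (min (c' i) k : ℤ)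
      ≤ ∑ i ∈ Finset.univ.filter (fun i : Fin r => ¬ ((i:ℕ) < t)), (c' i : ℤ) :=
    Finset.sum_le_sum (fun i _ => by exact_mod_cast Nat.min_le_left _ _)
  have hA := claimA hc t
  rw [hmin] at hA
  have htot := total_eq hc
  have hrhs := rhs_min_eq (r := r) hν k
  rw [← ht] at hrhs
  linarith

/-- C3: prefix reconstruction from min-sums -/
lemma prefix_reconstruct {N : ℕ} {μ ν : ℕ → ℕ} (hμ : Antitone μ)
    (hμ0 : ∀ i, N ≤ i → μ i = 0) (hν0 : ∀ i, N ≤ i → ν i = 0)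
    (hsz : ∑ j ∈ range N, ν j = ∑ j ∈ range N, μ j)
    (hmin : ∀ k, ∑ j ∈ range N, min (μ j) k ≤ ∑ j ∈ range N, min (ν j) k) :
    ∀ t, ∑ j ∈ range t, ν j ≤ ∑ j ∈ range t, μ j := by
  have main : ∀ t, t ≤ N → ∑ j ∈ range t, ν j ≤ ∑ j ∈ range t, μ j := by
    intro t htN
    set k0 := μ t with hk0
    have step1 : ∑ j ∈ range t, ν j ≤ t * k0 + ∑ j ∈ range t, (ν j - min (ν j) k0) := by
      have : ∀ j ∈ range t, ν j ≤ k0 + (ν j - min (ν j) k0) := by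
        intro j _
        rcases le_total (ν j) k0 with h | h
        · rw [min_eq_left h]; omega
        · rw [min_eq_right h]; omega
      calc ∑ j ∈ range t, ν j ≤ ∑ j ∈ range t, (k0 + (ν j - min (ν j) k0)) :=
        Finset.sum_le_sum this
      _ = t * k0 + ∑ j ∈ range t, (ν j - min (ν j) k0) := by
        rw [Finset.sum_add_distrib, Finset.sum_const, Finset.card_range, smul_eq_mul]
    have step1b : ∑ j ∈ range t, (ν j - min (ν j) k0) ≤ ∑ j ∈ range N, (ν j - min (ν j) k0) :=
      Finset.sum_le_sum_of_subset (by intro x hx; simp at *; omega)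
    have hdistν : ∑ j ∈ range N, (ν j - min (ν j) k0) + ∑ j ∈ range N, min (ν j) k0
        = ∑ j ∈ range N, ν j := by
      rw [← Finset.sum_add_distrib]
      exact Finset.sum_congr rfl (fun j _ => by
        rcases le_total (ν j) k0 with h | h
        · rw [min_eq_left h]; omega
        · rw [min_eq_right h]; omega)
    have hdistμ : ∑ j ∈ range N, (μ j - min (μ j) k0) + ∑ j ∈ range N, min (μ j) k0
        = ∑ j ∈ range N, μ j := by
      rw [← Finset.sum_add_distrib]
      exact Finset.sum_congr rfl (fun j _ => by
        rcases le_total (μ j) k0 with h | h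
        · rw [min_eq_left h]; omega
        · rw [min_eq_right h]; omega)
    have step2 : ∑ j ∈ range N, (ν j - min (ν j) k0) ≤ ∑ j ∈ range N, (μ j - min (μ j) k0) := by
      have := hmin k0
      omega
    have step3 : ∑ j ∈ range N, (μ j - min (μ j) k0) = ∑ j ∈ range t, (μ j - k0) := by
      have hsub : range t ⊆ range N := by intro x hx; simp at *; omega
      rw [← Finset.sum_sdiff hsub]
      have hzero : ∀ j ∈ range N \ range t, μ j - min (μ j) k0 = 0 := by
        intro j hj
        simp only [Finset.mem_sdiff, Finset.mem_range] at hj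
        have : μ j ≤ k0 := hμ (by omega)
        rw [min_eq_left this]; omega
      rw [Finset.sum_congr rfl hzero, Finset.sum_const_zero, zero_add]
      exact Finset.sum_congr rfl (fun j hj => by
        have : k0 ≤ μ j := hμ (by simp at hj; omega)
        rw [min_eq_right this])
    have final : t * k0 + ∑ j ∈ range t, (μ j - k0) = ∑ j ∈ range t, μ j := by
      have hconst : t * k0 = ∑ _j ∈ range t, k0 := by
        rw [Finset.sum_const, Finset.card_range, smul_eq_mul]
      rw [hconst, ← Finset.sum_add_distrib]
      exact Finset.sum_congr rfl (fun j hj => by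
        have : k0 ≤ μ j := hμ (by simp at hj; omega)
        omega)
    omega
  intro t
  rcases le_or_gt t N with h | h
  · exact main t h
  · have h1 : ∑ j ∈ range t, ν j = ∑ j ∈ range N, ν j := by
      rw [← Finset.sum_subset (by intro x hx; simp at *; omega : range N ⊆ range t)]
      intro x hx hxN
      exact hν0 x (by simp at hxN ⊢; omega)
    have h2 : ∑ j ∈ range t, μ j = ∑ j ∈ range N, μ j := by
      rw [← Finset.sum_subset (by intro x hx; simp at *; omega : range N ⊆ range t)]
      intro x hx hxN
      exact hμ0 x (by simp at hxN ⊢; omega)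
    rw [h1, h2]
    exact main N (le_refl N)


/-- C4: diagonal rigidity -/
lemma diag_rigid (hν : Antitone ν) (hc : ∀ i : Fin r, (c' i : ℤ) = (ν i : ℤ) - i + σ i)
    (hmineq : ∀ k : ℕ, ∑ i, (min (c' i) k : ℤ) = ∑ j ∈ range r, (min (ν j) k : ℤ)) :
    σ = 1 := by
  classical
  -- step 1 : equality extraction for each k
  have key : ∀ k : ℕ,
      (∀ i : Fin r, ¬((i:ℕ) < ((range r).filter (fun j => k < ν j)).card) → c' i ≤ k) ∧
      (∑ i ∈ Ffin r (((range r).filter (fun j => k < ν j)).card), (c' i : ℤ)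
        = ∑ j ∈ range (((range r).filter (fun j => k < ν j)).card), (ν j : ℤ)) := by
    intro k
    set t := ((range r).filter (fun j => k < ν j)).card with ht
    have htr : t ≤ r := tk_le hν k
    have hmtr : min t r = t := min_eq_left htr
    have hsplitc : ∑ i, (min (c' i) k : ℤ)
        = ∑ i ∈ Ffin r t, (min (c' i) k : ℤ)
          + ∑ i ∈ Finset.univ.filter (fun i : Fin r => ¬ ((i:ℕ) < t)), (min (c' i) k : ℤ) :=
      (Finset.sum_filter_add_sum_filter_not Finset.univ _ _).symm
    have hsplitc' : ∑ i, (c' i : ℤ)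
        = ∑ i ∈ Ffin r t, (c' i : ℤ)
          + ∑ i ∈ Finset.univ.filter (fun i : Fin r => ¬ ((i:ℕ) < t)), (c' i : ℤ) :=
      (Finset.sum_filter_add_sum_filter_not Finset.univ _ _).symm
    have hb1 : ∑ i ∈ Ffin r t, (min (c' i) k : ℤ) ≤ (t : ℤ) * k := by
      calc ∑ i ∈ Ffin r t, (min (c' i) k : ℤ) ≤ ∑ _i ∈ Ffin r t, (k : ℤ) :=
        Finset.sum_le_sum (fun i _ => by exact_mod_cast Nat.min_le_right _ _)
      _ = (t : ℤ) * k := by rw [Finset.sum_const, card_Ffin, hmtr]; push_cast; ring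
    have hb2 : ∑ i ∈ Finset.univ.filter (fun i : Fin r => ¬ ((i:ℕ) < t)), (min (c' i) k : ℤ)
        ≤ ∑ i ∈ Finset.univ.filter (fun i : Fin r => ¬ ((i:ℕ) < t)), (c' i : ℤ) :=
      Finset.sum_le_sum (fun i _ => by exact_mod_cast Nat.min_le_left _ _)
    have hA := claimA hc t
    rw [hmtr] at hA
    have htot := total_eq hc
    have hrhs := rhs_min_eq (r := r) hν k
    rw [← ht] at hrhs
    have hk := hmineq k
    have e2 : ∑ i ∈ Ffin r t, (c' i : ℤ) = ∑ j ∈ range t, (ν j : ℤ) := by linarith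
    have e1 : ∑ i ∈ Finset.univ.filter (fun i : Fin r => ¬ ((i:ℕ) < t)), (min (c' i) k : ℤ)
        = ∑ i ∈ Finset.univ.filter (fun i : Fin r => ¬ ((i:ℕ) < t)), (c' i : ℤ) := by linarith
    refine ⟨?_, e2⟩
    intro i hi
    have := (Finset.sum_eq_sum_iff_of_le
      (fun i _ => by exact_mod_cast Nat.min_le_left (c' i) k : ∀ i ∈ Finset.univ.filter
        (fun i : Fin r => ¬ ((i:ℕ) < t)), (min (c' i) k : ℤ) ≤ (c' i : ℤ))).1 e1 i
      (Finset.mem_filter.2 ⟨Finset.mem_univ i, hi⟩)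
    have hmm : min (c' i) k = c' i := by exact_mod_cast this
    omega
  -- step 2 : prefix equalities
  have prefixEq : ∀ t, t ≤ r →
      ∑ i ∈ Ffin r t, (c' i : ℤ) = ∑ j ∈ range t, (ν j : ℤ) := by
    intro t htr
    set k := ν t with hk
    set t' := ((range r).filter (fun j => k < ν j)).card with ht'
    have ht'r : t' ≤ r := tk_le hν k
    have ht't : t' ≤ t := by
      by_contra hcon
      push_neg at hcon
      have htlt : t < r := lt_of_lt_of_le hcon ht'r
      have := (mem_tk hν k htlt).1 hcon
      omega
    obtain ⟨hE1, hE2⟩ := key k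
    rw [← ht'] at hE1 hE2
    have hsubF : Ffin r t' ⊆ Ffin r t := Ffin_subset ht't
    have hsubR : range t' ⊆ range t := by intro x hx; simp at *; omega
    have hup : ∑ i ∈ Ffin r t \ Ffin r t', (c' i : ℤ) ≤ ((t - t' : ℕ) : ℤ) * k := by
      have hcard : (Ffin r t \ Ffin r t').card = t - t' := by
        rw [Finset.card_sdiff_of_subset hsubF, card_Ffin, card_Ffin,
          min_eq_left htr, min_eq_left ht'r]
      calc ∑ i ∈ Ffin r t \ Ffin r t', (c' i : ℤ)
          ≤ ∑ _i ∈ Ffin r t \ Ffin r t', (k : ℤ) := by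
            refine Finset.sum_le_sum (fun i hi => ?_)
            obtain ⟨hi1, hi2⟩ := Finset.mem_sdiff.1 hi
            rw [mem_Ffin] at hi2
            exact_mod_cast hE1 i hi2
      _ = ((t - t' : ℕ) : ℤ) * k := by rw [Finset.sum_const, hcard]; push_cast; ring
    have hflat : ∑ j ∈ range t \ range t', (ν j : ℤ) = ((t - t' : ℕ) : ℤ) * k := by
      have hval : ∀ j ∈ range t \ range t', (ν j : ℤ) = (k : ℤ) := by
        intro j hj
        simp only [Finset.mem_sdiff, Finset.mem_range] at hj
        have hjr : j < r := lt_of_lt_of_le hj.1 htr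
        have hle : ν j ≤ k := by
          have := (mem_tk hν k hjr)
          omega
        have hge : k ≤ ν j := hν (le_of_lt hj.1) |>.trans_eq' rfl
        omega
      rw [Finset.sum_congr rfl hval, Finset.sum_const, Finset.card_sdiff_of_subset hsubR,
        Finset.card_range, Finset.card_range]
      push_cast; ring
    have hup2 : ∑ i ∈ Ffin r t, (c' i : ℤ) ≤ ∑ j ∈ range t, (ν j : ℤ) := by
      have h1 : ∑ i ∈ Ffin r t, (c' i : ℤ)
          = ∑ i ∈ Ffin r t', (c' i : ℤ) + ∑ i ∈ Ffin r t \ Ffin r t', (c' i : ℤ) := by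
        rw [Finset.sum_sdiff_eq_sub hsubF]; ring
      have h2 : ∑ j ∈ range t, (ν j : ℤ)
          = ∑ j ∈ range t', (ν j : ℤ) + ∑ j ∈ range t \ range t', (ν j : ℤ) := by
        rw [Finset.sum_sdiff_eq_sub hsubR]; ring
      rw [h1, h2, hE2, hflat]
      linarith
    have hA := claimA hc t
    rw [min_eq_left htr] at hA
    linarith
  -- step 3 : pointwise equality
  have hpt : ∀ i : Fin r, (c' i : ℤ) = (ν (i : ℕ) : ℤ) := by
    intro i
    have h1 := prefixEq ((i : ℕ) + 1) i.2
    have h2 := prefixEq (i : ℕ) (le_of_lt i.2)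
    have hins : Ffin r ((i : ℕ) + 1) = insert i (Ffin r (i : ℕ)) := by
      ext j
      simp only [mem_Ffin, Finset.mem_insert]
      constructor
      · intro hj
        rcases Nat.lt_succ_iff_lt_or_eq.1 hj with h | h
        · right; exact h
        · left; exact Fin.ext h
      · rintro (rfl | hj)
        · omega
        · omega
    have hnotmem : i ∉ Ffin r (i : ℕ) := by rw [mem_Ffin]; omega
    rw [hins, Finset.sum_insert hnotmem] at h1
    rw [Finset.sum_range_succ] at h1
    omega
  -- step 4 : conclude
  apply Equiv.ext
  intro i
  have := hc i
  rw [hpt i] at this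
  have hvi : ((σ i : ℕ) : ℤ) = ((i : ℕ) : ℤ) := by omega
  have : (σ i : ℕ) = (i : ℕ) := by exact_mod_cast hvi
  simpa using Fin.ext this

end core

-- ### Section 5 : partition plumbing
lemma Ptn.ext' {mu nu : Ptn} (h : mu.parts = nu.parts) : mu = nu := by
  cases mu; cases nu; simp_all

lemma parts_zero_of_len_le (mu : Ptn) {i : ℕ} (h : mu.len ≤ i) : mu.parts i = 0 := by
  obtain ⟨N, hN⟩ := mu.eventually_zero
  have hmem : mu.len ∈ {N | ∀ i, N ≤ i → mu.parts i = 0} := Nat.sInf_mem ⟨N, hN⟩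
  exact hmem i h

lemma parts_pos_of_lt_len (mu : Ptn) {i : ℕ} (h : i < mu.len) : 1 ≤ mu.parts i := by
  by_contra h0
  push_neg at h0
  have hz : mu.parts i = 0 := by omega
  have hle : mu.len ≤ i := Nat.sInf_le (fun j hj => le_antisymm ((mu.antitone' hj).trans (le_of_eq hz)) (Nat.zero_le _))
  omega

lemma antitone_parts (mu : Ptn) : Antitone mu.parts := fun _ _ h => mu.antitone' h

lemma size_eq_sum (mu : Ptn) {n : ℕ} (h : mu.len ≤ n) :
    mu.size = ∑ i ∈ Finset.range n, mu.parts i := by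
  rw [Ptn.size]
  apply finsum_eq_finset_sum_of_support_subset
  intro i hi
  simp only [Function.mem_support] at hi
  simp only [Finset.coe_range, Set.mem_Iio]
  by_contra hcon
  exact hi (parts_zero_of_len_le mu (by omega))

lemma len_le_size (mu : Ptn) : mu.len ≤ mu.size := by
  rw [size_eq_sum mu (le_refl _)]
  calc mu.len = ∑ _i ∈ Finset.range mu.len, 1 := by simp
  _ ≤ _ := Finset.sum_le_sum (fun i hi => parts_pos_of_lt_len mu (Finset.mem_range.1 hi))

lemma parts_le_size (mu : Ptn) (i : ℕ) : mu.parts i ≤ mu.size := by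
  rcases lt_or_ge i mu.len with h | h
  · rw [size_eq_sum mu (le_refl _)]
    exact Finset.single_le_sum (fun j _ => Nat.zero_le _) (Finset.mem_range.2 h)
  · rw [parts_zero_of_len_le mu h]; exact Nat.zero_le _

lemma size_le_of_dle {mu lam : Ptn} (h : mu.dle lam) : mu.size ≤ lam.size := by
  have hk := h (max mu.len lam.len)
  rwa [← size_eq_sum mu (le_max_left _ _), ← size_eq_sum lam (le_max_right _ _)] at hk

lemma dle_sizes {mu lam : Ptn} (h : mu.dle lam) {n : ℕ} (hn : mu.len ≤ n) (hn' : lam.len ≤ n) :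
    ∀ t, ∑ i ∈ Finset.range t, mu.parts i ≤ ∑ i ∈ Finset.range t, lam.parts i := h

lemma finite_dle (lam : Ptn) : {mu : Ptn | mu.dle lam}.Finite := by
  classical
  set s := lam.size with hs
  set f : Ptn → (Fin (s+1) → Fin (s+1)) :=
    fun mu i => ⟨min (mu.parts i.1) s, by omega⟩ with hf
  have hinj : Set.InjOn f {mu : Ptn | mu.dle lam} := by
    intro mu hmu nu hnu heq
    have hszmu : mu.size ≤ s := size_le_of_dle hmu
    have hsznu : nu.size ≤ s := size_le_of_dle hnu
    apply Ptn.ext'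
    funext i
    rcases le_or_gt i s with h | h
    · have h1 := congrFun heq ⟨i, by omega⟩
      have h2 : min (mu.parts i) s = min (nu.parts i) s := congrArg Fin.val h1
      have h3 : mu.parts i ≤ s := (parts_le_size mu i).trans hszmu
      have h4 : nu.parts i ≤ s := (parts_le_size nu i).trans hsznu
      omega
    · rw [parts_zero_of_len_le mu (by have := (len_le_size mu).trans hszmu; omega),
        parts_zero_of_len_le nu (by have := (len_le_size nu).trans hsznu; omega)]
  exact Set.Finite.of_finite_image (Set.toFinite _) hinj

-- monomial associated to a partition
noncomputable def monoOf (mu : Ptn) : ℕ →₀ ℕ :=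
  ∑ i ∈ Finset.range mu.len, Finsupp.single (mu.parts i - 1) 1

lemma W_monoOf (mu : Ptn) : W (monoOf mu) = mu.size := by
  rw [monoOf, W_sum, size_eq_sum mu (le_refl _)]
  exact Finset.sum_congr rfl (fun i hi => by
    rw [W_single]
    have := parts_pos_of_lt_len mu (Finset.mem_range.1 hi)
    omega)

lemma Phi_monoOf (k : ℕ) (mu : Ptn) :
    Phi k (monoOf mu) = ∑ i ∈ Finset.range mu.len, min (mu.parts i) k := by
  rw [monoOf, Phi_sum]
  exact Finset.sum_congr rfl (fun i hi => by
    rw [Phi_single]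
    have := parts_pos_of_lt_len mu (Finset.mem_range.1 hi)
    omega)

lemma hsing_parts (mu : Ptn) {i : ℕ} (hi : i < mu.len) :
    hsing ((mu.parts i : ℤ)) = Finsupp.single (mu.parts i - 1) 1 := by
  have h1 := parts_pos_of_lt_len mu hi
  rw [hsing, if_pos (by exact_mod_cast h1 : (1:ℤ) ≤ (mu.parts i : ℤ))]
  simp only [Int.toNat_natCast]

-- ### Section 5b : sF and spF bounds
lemma sF_eq_detH (nu : Ptn) :
    sF nu = detH (fun i : Fin nu.len => (nu.parts i : ℤ) - i) := by
  rw [sF, detH]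

lemma sum_aux (nu : Ptn) :
    (∑ i : Fin nu.len, (((nu.parts i : ℤ) - i) + i)) = (nu.size : ℤ) := by
  have : ∀ i : Fin nu.len, (((nu.parts i : ℤ) - i) + i) = (nu.parts i : ℤ) := fun i => by ring
  rw [Finset.sum_congr rfl (fun i _ => this i)]
  rw [size_eq_sum nu (le_refl _), ← Fin.sum_univ_eq_sum_range (fun i => nu.parts i) nu.len]
  push_cast
  rfl

lemma Mdeg_sF (nu : Ptn) : Mdeg (nu.size) (sF nu) := by
  rw [sF_eq_detH]
  have := Mdeg_detH (fun i : Fin nu.len => (nu.parts i : ℤ) - i)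
  rwa [sum_aux nu] at this

lemma Mdeg_spF_sub (nu : Ptn) : Mdeg ((nu.size : ℤ) - 2) (spF nu - sF nu) := by
  by_cases h0 : nu.len = 0
  · have h1 : spF nu = 1 := by rw [spF, if_pos h0]
    have h2 : sF nu = 1 := by
      rw [sF]
      have : IsEmpty (Fin nu.len) := by rw [h0]; exact Fin.isEmpty'
      exact Matrix.det_isEmpty
    rw [h1, h2, sub_self]
    exact Mdeg_zero _
  · have hr : 0 < nu.len := Nat.pos_of_ne_zero h0
    have hsp : spF nu = (2⁻¹ : ℝ) • spdetH (fun i : Fin nu.len => (nu.parts i : ℤ) - i) := by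
      rw [spF, if_neg h0, spdetH]
    have hkey := spdetH_sub hr (fun i : Fin nu.len => (nu.parts i : ℤ) - i)
    rw [sum_aux nu] at hkey
    have heq : spF nu - sF nu = (2⁻¹ : ℝ) •
        (spdetH (fun i : Fin nu.len => (nu.parts i : ℤ) - i)
          - (2:ℝ) • detH (fun i : Fin nu.len => (nu.parts i : ℤ) - i)) := by
      rw [smul_sub, hsp, sF_eq_detH, smul_smul]
      norm_num
    rw [heq]
    exact Mdeg_smul _ hkey

lemma Mdeg_spF (nu : Ptn) : Mdeg (nu.size) (spF nu) := by
  have h1 : spF nu = (spF nu - sF nu) + sF nu := by ring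
  rw [h1]
  exact Mdeg_add ((Mdeg_spF_sub nu).mono (by omega)) (Mdeg_sF nu)

-- ### Section 5c : coefficient extraction lemmas
lemma coeff_spF_small {mu nu : Ptn} (h : nu.size < mu.size) :
    coeff (monoOf mu) (spF nu) = 0 := by
  apply coeff_eq_zero_of_Mdeg (Mdeg_spF nu)
  rw [W_monoOf]
  exact_mod_cast h

lemma coeff_spF_eq_sF {mu nu : Ptn} (h : nu.size ≤ mu.size) :
    coeff (monoOf mu) (spF nu) = coeff (monoOf mu) (sF nu) := by
  have h1 : coeff (monoOf mu) (spF nu - sF nu) = 0 := by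
    apply coeff_eq_zero_of_Mdeg (Mdeg_spF_sub nu)
    rw [W_monoOf]
    omega
  rw [MvPolynomial.coeff_sub] at h1
  linarith

lemma matching_of_coeff_prod {r : ℕ} (c : Fin r → ℤ) {m : ℕ →₀ ℕ}
    (h : coeff m (∏ i, H (c i)) ≠ 0) :
    (∀ i, 0 ≤ c i) ∧ MofF c = m := by
  classical
  have hpos : ∀ i, 0 ≤ c i := by
    by_contra hcon
    push_neg at hcon
    obtain ⟨i, hi⟩ := hcon
    rw [prod_H_zero c (Finset.mem_univ i) hi] at h
    simp at h
  refine ⟨hpos, ?_⟩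
  rw [prod_H_eq c hpos, coeff_monomial] at h
  split_ifs at h with he
  · exact he
  · simp at h

lemma coeff_sF_term_exists {nu : Ptn} {m : ℕ →₀ ℕ} (h : coeff m (sF nu) ≠ 0) :
    ∃ σ : Equiv.Perm (Fin nu.len),
      coeff m (∏ i : Fin nu.len, H ((nu.parts i : ℤ) - i + σ i)) ≠ 0 := by
  rw [sF_eq_detH, detH_eq] at h
  rw [MvPolynomial.coeff_sum] at h
  obtain ⟨σ, _, hσ⟩ := Finset.exists_ne_zero_of_sum_ne_zero h
  refine ⟨σ, fun hcon => hσ ?_⟩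
  have h2 : coeff m ((Equiv.Perm.sign σ : ℤ) • ∏ i : Fin nu.len, H ((nu.parts i : ℤ) - i + σ i))
      = (Equiv.Perm.sign σ : ℤ) • coeff m (∏ i : Fin nu.len, H ((nu.parts i : ℤ) - i + σ i)) := by
    rw [MvPolynomial.coeff_smul]
  rw [h2, hcon]
  simp

/-- the multiset of (nonzero) entries of a matching term determines the Phi statistics -/
lemma phi_of_matching {nu : Ptn} {σ : Equiv.Perm (Fin nu.len)} {m : ℕ →₀ ℕ}
    (hpos : ∀ i : Fin nu.len, 0 ≤ (nu.parts i : ℤ) - i + σ i)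
    (hm : MofF (fun i : Fin nu.len => (nu.parts i : ℤ) - i + σ i) = m) (k : ℕ) :
    ∑ i : Fin nu.len, min (((nu.parts i : ℤ) - i + σ i).toNat) k = Phi k m := by
  rw [← hm, Phi_MofF k _ hpos]


-- ### Section 6 : triangularity of Schur coefficients
lemma coeff_sF_dominance {mu nu : Ptn} (hsz : nu.size = mu.size)
    (hne : coeff (monoOf mu) (sF nu) ≠ 0) : nu.dle mu := by
  classical
  obtain ⟨σ, hσ⟩ := coeff_sF_term_exists hne
  obtain ⟨hpos, hm⟩ := matching_of_coeff_prod _ hσ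
  set c' : Fin nu.len → ℕ := fun i => ((nu.parts i : ℤ) - i + σ i).toNat with hc'
  have hc : ∀ i : Fin nu.len, (c' i : ℤ) = (nu.parts i : ℤ) - i + σ i := fun i =>
    Int.toNat_of_nonneg (hpos i)
  have hphi : ∀ k : ℕ, ∑ i : Fin nu.len, min (c' i) k
      = ∑ i ∈ Finset.range mu.len, min (mu.parts i) k := by
    intro k
    have h1 := phi_of_matching hpos hm k
    rw [Phi_monoOf] at h1
    exact h1
  have hminsum : ∀ k : ℕ, ∑ i : Fin nu.len, (min (c' i) k : ℤ)
      ≤ ∑ j ∈ Finset.range nu.len, (min (nu.parts j) k : ℤ) :=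
    fun k => minsum_le (antitone_parts nu) hc k
  set N := max nu.len mu.len with hN
  have hsubμ : Finset.range mu.len ⊆ Finset.range N := by intro x hx; simp at *; omega
  have hsubν : Finset.range nu.len ⊆ Finset.range N := by intro x hx; simp at *; omega
  have hextμ : ∀ k : ℕ, ∑ i ∈ Finset.range N, min (mu.parts i) k
      = ∑ i ∈ Finset.range mu.len, min (mu.parts i) k := by
    intro k
    rw [← Finset.sum_subset hsubμ]
    intro x _ hx
    rw [parts_zero_of_len_le mu (by simp at hx; omega)]
    simp
  have hextν : ∀ k : ℕ, ∑ i ∈ Finset.range N, min (nu.parts i) k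
      = ∑ i ∈ Finset.range nu.len, min (nu.parts i) k := by
    intro k
    rw [← Finset.sum_subset hsubν]
    intro x _ hx
    rw [parts_zero_of_len_le nu (by simp at hx; omega)]
    simp
  have hmin : ∀ k : ℕ, ∑ j ∈ Finset.range N, min (mu.parts j) k
      ≤ ∑ j ∈ Finset.range N, min (nu.parts j) k := by
    intro k
    rw [hextμ k, hextν k, ← hphi k]
    exact_mod_cast hminsum k
  have hsz' : ∑ j ∈ Finset.range N, nu.parts j = ∑ j ∈ Finset.range N, mu.parts j := by
    rw [← size_eq_sum nu (le_max_left _ _), ← size_eq_sum mu (le_max_right _ _)]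
    exact hsz
  exact prefix_reconstruct (antitone_parts mu)
    (fun i hi => parts_zero_of_len_le mu (by omega))
    (fun i hi => parts_zero_of_len_le nu (by omega)) hsz' hmin

lemma MofF_id (nu : Ptn) :
    MofF (fun i : Fin nu.len => (nu.parts i : ℤ) - i + ((1 : Equiv.Perm (Fin nu.len)) i)) = monoOf nu := by
  rw [MofF, monoOf]
  rw [← Fin.sum_univ_eq_sum_range (fun i => Finsupp.single (nu.parts i - 1) 1) nu.len]
  refine Finset.sum_congr rfl (fun i _ => ?_)
  have h1 : (nu.parts i : ℤ) - i + ((1 : Equiv.Perm (Fin nu.len)) i) = (nu.parts i : ℤ) := by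
    simp
  rw [h1, hsing_parts nu i.2]

lemma coeff_sF_diag (nu : Ptn) : coeff (monoOf nu) (sF nu) = 1 := by
  classical
  rw [sF_eq_detH, detH_eq, MvPolynomial.coeff_sum]
  rw [Finset.sum_eq_single (1 : Equiv.Perm (Fin nu.len))]
  · rw [MvPolynomial.coeff_smul]
    have hpos : ∀ i : Fin nu.len, 0 ≤ (nu.parts i : ℤ) - i + ((1 : Equiv.Perm (Fin nu.len)) i) := by
      intro i; simp
    rw [prod_H_eq _ hpos, coeff_monomial, if_pos (MofF_id nu)]
    simp
  · intro σ _ hσne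
    rw [MvPolynomial.coeff_smul]
    by_contra hne0
    have hcoeff : coeff (monoOf nu) (∏ i : Fin nu.len, H ((nu.parts i : ℤ) - i + σ i)) ≠ 0 := by
      intro hz
      rw [hz] at hne0
      simp at hne0
    obtain ⟨hpos, hm⟩ := matching_of_coeff_prod _ hcoeff
    set c' : Fin nu.len → ℕ := fun i => ((nu.parts i : ℤ) - i + σ i).toNat with hc'
    have hc : ∀ i : Fin nu.len, (c' i : ℤ) = (nu.parts i : ℤ) - i + σ i := fun i =>
      Int.toNat_of_nonneg (hpos i)
    have hmineq : ∀ k : ℕ, ∑ i : Fin nu.len, (min (c' i) k : ℤ)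
        = ∑ j ∈ Finset.range nu.len, (min (nu.parts j) k : ℤ) := by
      intro k
      have h1 := phi_of_matching hpos hm k
      rw [Phi_monoOf] at h1
      have h2 : ∑ i : Fin nu.len, min (c' i) k
          = ∑ j ∈ Finset.range nu.len, min (nu.parts j) k := h1
      exact_mod_cast h2
    exact hσne (diag_rigid (antitone_parts nu) hc hmineq)
  · intro hcon
    exact absurd (Finset.mem_univ _) hcon


-- ### Section 7a : columns
lemma len_colP (j : ℕ) : (colP j).len = j := by
  have hmemj : j ∈ {N | ∀ i, N ≤ i → (colP j).parts i = 0} := by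
    intro i hi
    simp only [colP]
    rw [if_neg (by omega)]
  apply le_antisymm (Nat.sInf_le hmemj)
  by_contra hcon
  push_neg at hcon
  have hmem := Nat.sInf_mem (⟨j, hmemj⟩ : {N | ∀ i, N ≤ i → (colP j).parts i = 0}.Nonempty)
  have h2 := hmem (j-1) (by omega)
  simp only [colP] at h2
  rw [if_pos (by omega)] at h2
  omega

lemma size_colP (j : ℕ) : (colP j).size = j := by
  rw [size_eq_sum _ (le_of_eq (len_colP j))]
  have h1 : ∀ i ∈ Finset.range j, (colP j).parts i = 1 := by
    intro i hi
    simp only [colP]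
    rw [if_pos (Finset.mem_range.1 hi)]
  rw [Finset.sum_congr rfl h1]
  simp

lemma colP_of_dle {mu : Ptn} {i : ℕ} (hdle : mu.dle (colP i)) :
    mu = colP mu.len ∧ mu.len ≤ i := by
  have h0 : mu.parts 0 ≤ 1 := by
    have h1 := hdle 1
    simp only [Finset.sum_range_one] at h1
    refine h1.trans ?_
    simp only [colP]
    split_ifs <;> omega
  have h1 : ∀ k, mu.parts k ≤ 1 := fun k => (mu.antitone' (Nat.zero_le k)).trans h0
  constructor
  · apply Ptn.ext'
    funext k
    simp only [colP]
    split_ifs with hk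
    · have := parts_pos_of_lt_len mu hk
      have := h1 k
      omega
    · exact parts_zero_of_len_le mu (by omega)
  · have hsz := size_le_of_dle hdle
    rw [size_colP] at hsz
    exact (len_le_size mu).trans hsz

-- ### Section 7b : Toeplitz-Hessenberg determinants
noncomputable def hg : ℕ → Lam := fun j => H (1 + (j : ℤ))

lemma hg_eq (k : ℕ) : hg k = X k := by
  rw [hg, H, if_pos (by omega : (1:ℤ) ≤ 1 + (k:ℤ))]
  congr 1
  omega

noncomputable def Tdet (a : ℕ → Lam) (n : ℕ) : Lam :=
  (Matrix.of fun i j : Fin n => if (i : ℕ) = 0 then a (j : ℕ) else H (1 + (j:ℤ) - (i:ℤ))).det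

lemma Tdet_zero (a : ℕ → Lam) : Tdet a 0 = 1 := Matrix.det_isEmpty

lemma Tdet_one (a : ℕ → Lam) : Tdet a 1 = a 0 := by
  rw [Tdet, Matrix.det_fin_one]
  simp

lemma det_congr_dim {r s : ℕ} (h : r = s) (g : ℕ → ℕ → Lam) :
    (Matrix.of fun i j : Fin r => g (i:ℕ) (j:ℕ)).det
      = (Matrix.of fun i j : Fin s => g (i:ℕ) (j:ℕ)).det := by
  subst h; rfl

lemma sFcol_eq (n : ℕ) : sF (colP n) = Tdet hg n := by
  have h1 : sF (colP n)
      = (Matrix.of fun i j : Fin (colP n).len =>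
          (fun i' j' : ℕ => H (((colP n).parts i' : ℤ) - i' + j')) (i:ℕ) (j:ℕ)).det := rfl
  rw [h1, det_congr_dim (len_colP n) (fun i' j' => H (((colP n).parts i' : ℤ) - (i' : ℤ) + (j' : ℤ)))]
  rw [Tdet]
  congr 1
  funext i j
  simp only [Matrix.of_apply]
  have hp : (colP n).parts (i : ℕ) = 1 := by
    simp only [colP]
    rw [if_pos i.2]
  rw [hp]
  split_ifs with h0
  · rw [hg]
    congr 1
    rw [h0]
    push_cast
    ring
  · congr 1
    ring

lemma Trec (a : ℕ → Lam) (n : ℕ) :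
    Tdet a (n+2) = a 0 * Tdet hg (n+1) - Tdet (fun j => a (j+1)) (n+1) := by
  simp only [Tdet]
  rw [Matrix.det_succ_column_zero, Fin.sum_univ_succ, Fin.sum_univ_succ]
  have hvanish : ∀ i : Fin n,
      (-1:Lam) ^ ((i.succ.succ : Fin (n+2)) : ℕ)
        * Matrix.of (fun i j : Fin (n+2) => if (i:ℕ) = 0 then a (j:ℕ) else H (1 + (j:ℤ) - (i:ℤ)))
            i.succ.succ 0
        * ((Matrix.of (fun i j : Fin (n+2) => if (i:ℕ) = 0 then a (j:ℕ) else H (1 + (j:ℤ) - (i:ℤ)))).submatrix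
            i.succ.succ.succAbove Fin.succ).det = 0 := by
    intro i
    have hval : ((i.succ.succ : Fin (n+2)) : ℕ) = (i : ℕ) + 2 := by
      simp [Fin.val_succ]
    have hentry : Matrix.of (fun i j : Fin (n+2) => if (i:ℕ) = 0 then a (j:ℕ) else H (1 + (j:ℤ) - (i:ℤ)))
        i.succ.succ 0 = 0 := by
      simp only [Matrix.of_apply, hval]
      rw [if_neg (by omega)]
      apply H_neg
      have h0v : ((0 : Fin (n+2)) : ℕ) = 0 := rfl
      rw [h0v]
      push_cast
      omega
    rw [hentry, mul_zero, zero_mul]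
  rw [Finset.sum_eq_zero (fun i _ => hvanish i), add_zero]
  have hA00 : Matrix.of (fun i j : Fin (n+2) => if (i:ℕ) = 0 then a (j:ℕ) else H (1 + (j:ℤ) - (i:ℤ))) 0 0 = a 0 := by
    simp
  have hA10 : Matrix.of (fun i j : Fin (n+2) => if (i:ℕ) = 0 then a (j:ℕ) else H (1 + (j:ℤ) - (i:ℤ)))
      (Fin.succ 0) 0 = 1 := by
    simp only [Matrix.of_apply, Fin.val_succ, Fin.val_zero]
    simp only [Nat.add_one_ne_zero, ↓reduceIte]
    have : (1 : ℤ) + ((0 : Fin (n+2)) : ℕ) - (((Fin.succ 0 : Fin (n+2)) : ℕ) : ℤ) = 0 := by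
      simp [Fin.val_succ]
    rw [H]
    rw [if_neg (by simp [Fin.val_succ]), if_pos (by simp [Fin.val_succ])]
  have hM0 : (Matrix.of (fun i j : Fin (n+2) => if (i:ℕ) = 0 then a (j:ℕ) else H (1 + (j:ℤ) - (i:ℤ)))).submatrix
      (Fin.succAbove 0) Fin.succ
      = Matrix.of (fun i j : Fin (n+1) => if (i:ℕ) = 0 then hg (j:ℕ) else H (1 + (j:ℤ) - (i:ℤ))) := by
    funext i j
    simp only [Matrix.submatrix_apply, Matrix.of_apply, Fin.zero_succAbove, Fin.val_succ]
    rw [if_neg (by omega)]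
    split_ifs with h0
    · rw [hg]
      congr 1
      rw [h0]
      push_cast
      ring
    · congr 1
      push_cast
      ring
  have hM1 : (Matrix.of (fun i j : Fin (n+2) => if (i:ℕ) = 0 then a (j:ℕ) else H (1 + (j:ℤ) - (i:ℤ)))).submatrix
      (Fin.succ 0).succAbove Fin.succ
      = Matrix.of (fun i j : Fin (n+1) => if (i:ℕ) = 0 then a ((j:ℕ)+1) else H (1 + (j:ℤ) - (i:ℤ))) := by
    funext i j
    simp only [Matrix.submatrix_apply, Matrix.of_apply]
    by_cases h0 : (i : ℕ) = 0
    · have hrow : (Fin.succ 0 : Fin (n+2)).succAbove i = Fin.castSucc i := by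
        apply Fin.succAbove_of_castSucc_lt
        rw [Fin.lt_def]
        simp [h0]
      rw [hrow]
      simp only [Fin.coe_castSucc, h0, if_pos, Fin.val_succ]
    · have hrow : (Fin.succ 0 : Fin (n+2)).succAbove i = Fin.succ i := by
        apply Fin.succAbove_of_le_castSucc
        rw [Fin.le_def]
        simp only [Fin.coe_castSucc, Fin.val_succ, Fin.val_zero]
        omega
      rw [hrow]
      simp only [Fin.val_succ]
      rw [if_neg (by omega), if_neg h0]
      congr 1
      push_cast
      ring
  rw [hA00, hA10, hM0, hM1]
  simp only [Fin.val_zero, Fin.val_succ, pow_zero, pow_one, one_mul, mul_one]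
  ring

lemma Tdet_expand : ∀ n : ℕ, ∀ a : ℕ → Lam,
    Tdet a (n+1) = ∑ k ∈ Finset.range (n+1), ((-1:ℝ)^k) • (a k * Tdet hg (n - k)) := by
  intro n
  induction n with
  | zero =>
      intro a
      rw [Tdet_one]
      simp [Tdet_zero]
  | succ n ih =>
      intro a
      rw [show n+1+1 = n+2 from rfl, Trec a n, ih (fun j => a (j+1))]
      conv_rhs => rw [Finset.sum_range_succ']
      have h1 : ∀ k ∈ Finset.range (n+1), ((-1:ℝ)^(k+1)) • (a (k+1) * Tdet hg (n+1 - (k+1)))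
          = -(((-1:ℝ)^k) • (a (k+1) * Tdet hg (n - k))) := by
        intro k hk
        rw [Nat.succ_sub_succ, pow_succ]
        rw [mul_comm ((-1:ℝ)^k) (-1), ← smul_smul]
        simp
      rw [Finset.sum_congr rfl h1, Finset.sum_neg_distrib]
      simp only [pow_zero, one_smul, Nat.sub_zero]
      abel


-- ### Section 7c : the degree-comparison machinery
section alg
variable (f ftil : Lam →ₐ[ℝ] Lam) (d : ℕ)

def Sdeg (n : ℤ) (P : Lam) : Prop :=
  Mdeg n P ∧ Mdeg n (f P) ∧ Mdeg n (ftil P) ∧ Mdeg (n - d) (f P - ftil P)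

variable {f ftil d}

lemma Sdeg_mono {n n' : ℤ} (h : n ≤ n') {P : Lam} (hP : Sdeg f ftil d n P) :
    Sdeg f ftil d n' P :=
  ⟨hP.1.mono h, hP.2.1.mono h, hP.2.2.1.mono h, hP.2.2.2.mono (by omega)⟩

lemma Sdeg_zero (n : ℤ) : Sdeg f ftil d n 0 :=
  ⟨Mdeg_zero n, by rw [map_zero]; exact Mdeg_zero n, by rw [map_zero]; exact Mdeg_zero n,
   by rw [map_zero, map_zero, sub_zero]; exact Mdeg_zero _⟩

lemma Sdeg_one {n : ℤ} (h : 0 ≤ n) : Sdeg f ftil d n 1 :=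
  ⟨Mdeg_one h, by rw [map_one]; exact Mdeg_one h, by rw [map_one]; exact Mdeg_one h,
   by rw [map_one, map_one, sub_self]; exact Mdeg_zero _⟩

lemma Sdeg_add {n : ℤ} {P Q : Lam} (hP : Sdeg f ftil d n P) (hQ : Sdeg f ftil d n Q) :
    Sdeg f ftil d n (P + Q) := by
  refine ⟨Mdeg_add hP.1 hQ.1, ?_, ?_, ?_⟩
  · rw [map_add]; exact Mdeg_add hP.2.1 hQ.2.1
  · rw [map_add]; exact Mdeg_add hP.2.2.1 hQ.2.2.1
  · have hkey : f (P+Q) - ftil (P+Q) = (f P - ftil P) + (f Q - ftil Q) := by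
      rw [map_add, map_add]; ring
    rw [hkey]; exact Mdeg_add hP.2.2.2 hQ.2.2.2

lemma Sdeg_smulS {n : ℤ} (r : ℝ) {P : Lam} (hP : Sdeg f ftil d n P) :
    Sdeg f ftil d n (r • P) := by
  refine ⟨Mdeg_smul r hP.1, ?_, ?_, ?_⟩
  · rw [map_smul]; exact Mdeg_smul r hP.2.1
  · rw [map_smul]; exact Mdeg_smul r hP.2.2.1
  · have hkey : f (r • P) - ftil (r • P) = r • (f P - ftil P) := by
      rw [map_smul, map_smul, smul_sub]
    rw [hkey]; exact Mdeg_smul r hP.2.2.2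

lemma Sdeg_sub {n : ℤ} {P Q : Lam} (hP : Sdeg f ftil d n P) (hQ : Sdeg f ftil d n Q) :
    Sdeg f ftil d n (P - Q) := by
  have hkey : P - Q = P + ((-1 : ℝ) • Q) := by
    rw [neg_one_smul, sub_eq_add_neg]
  rw [hkey]
  exact Sdeg_add hP (Sdeg_smulS _ hQ)

lemma Sdeg_sum {n : ℤ} {ι : Type*} (s : Finset ι) (g : ι → Lam)
    (h : ∀ i ∈ s, Sdeg f ftil d n (g i)) : Sdeg f ftil d n (∑ i ∈ s, g i) := by
  classical
  induction s using Finset.induction_on with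
  | empty => simpa using Sdeg_zero n
  | insert a s hni ih =>
      rw [Finset.sum_insert hni]
      exact Sdeg_add (h a (Finset.mem_insert_self a s))
        (ih fun i hi => h i (Finset.mem_insert_of_mem hi))

lemma Sdeg_mul {a b : ℤ} {P Q : Lam} (hP : Sdeg f ftil d a P) (hQ : Sdeg f ftil d b Q) :
    Sdeg f ftil d (a + b) (P * Q) := by
  refine ⟨Mdeg_mul hP.1 hQ.1, ?_, ?_, ?_⟩
  · rw [map_mul]; exact Mdeg_mul hP.2.1 hQ.2.1
  · rw [map_mul]; exact Mdeg_mul hP.2.2.1 hQ.2.2.1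
  · have hkey : f (P*Q) - ftil (P*Q) = (f P - ftil P) * f Q + ftil P * (f Q - ftil Q) := by
      rw [map_mul, map_mul]; ring
    rw [hkey]
    exact Mdeg_add ((Mdeg_mul hP.2.2.2 hQ.2.1).mono (by omega))
      ((Mdeg_mul hP.2.2.1 hQ.2.2.2).mono (by omega))

lemma Sdeg_pow {a : ℤ} (ha : 0 ≤ a) {P : Lam} (hP : Sdeg f ftil d a P) :
    ∀ e : ℕ, Sdeg f ftil d (a * e) (P ^ e) := by
  intro e
  induction e with
  | zero => rw [pow_zero]; simpa using Sdeg_one (le_refl 0)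
  | succ e ih =>
      rw [pow_succ]
      exact Sdeg_mono (le_of_eq (by push_cast; ring)) (Sdeg_mul ih hP)

lemma Mdeg_finsum {c : ℤ} {ι : Type*} (g : ι → Lam) (h : ∀ x, Mdeg c (g x)) :
    Mdeg c (∑ᶠ x, g x) := by
  classical
  by_cases hfin : (Function.support g).Finite
  · rw [finsum_eq_sum g hfin]
    exact Mdeg_sum _ _ (fun i _ => h i)
  · rw [finsum_of_infinite_support hfin]
    exact Mdeg_zero c

variable {m mtil : Ptn → Ptn → ℝ}

lemma Mdeg_f_sF (hf : IsSpTriangular f m) (lam : Ptn) : Mdeg (lam.size) (f (sF lam)) := by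
  rw [hf.2.2 lam]
  apply Mdeg_finsum
  intro mu
  by_cases hz : m lam mu = 0
  · rw [hz, zero_smul]; exact Mdeg_zero _
  · refine (Mdeg_smul _ (Mdeg_spF mu)).mono ?_
    have := size_le_of_dle (hf.2.1 lam mu hz)
    omega

lemma Mdeg_diff_col (hf : IsSpTriangular f m) (hftil : IsSpTriangular ftil mtil)
    (hcol : ∀ i j : ℕ, j < i → i - j < d → m (colP i) (colP j) = mtil (colP i) (colP j))
    (n : ℕ) : Mdeg ((n:ℤ) - d) (f (sF (colP n)) - ftil (sF (colP n))) := by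
  rw [hf.2.2, hftil.2.2]
  have hfin1 : (Function.support fun mu => m (colP n) mu • spF mu).Finite := by
    apply (finite_dle (colP n)).subset
    intro mu hmu
    by_contra hdle
    apply hmu
    have hz : m (colP n) mu = 0 := by
      by_contra hz2; exact hdle (hf.2.1 _ _ hz2)
    simp [hz]
  have hfin2 : (Function.support fun mu => mtil (colP n) mu • spF mu).Finite := by
    apply (finite_dle (colP n)).subset
    intro mu hmu
    by_contra hdle
    apply hmu
    have hz : mtil (colP n) mu = 0 := by
      by_contra hz2; exact hdle (hftil.2.1 _ _ hz2)
    simp [hz]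
  rw [← finsum_sub_distrib hfin1 hfin2]
  apply Mdeg_finsum
  intro mu
  have hsub : m (colP n) mu • spF mu - mtil (colP n) mu • spF mu
      = (m (colP n) mu - mtil (colP n) mu) • spF mu := by rw [sub_smul]
  rw [hsub]
  by_cases hz : m (colP n) mu - mtil (colP n) mu = 0
  · rw [hz, zero_smul]; exact Mdeg_zero _
  · have hdle : mu.dle (colP n) := by
      rcases eq_or_ne (m (colP n) mu) 0 with h0 | h0
      · apply hftil.2.1
        intro h2
        rw [h0, h2] at hz
        simp at hz
      · exact hf.2.1 _ _ h0
    obtain ⟨hmu_eq, hlen⟩ := colP_of_dle hdle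
    by_cases hsmall : n - mu.len < d
    · exfalso
      apply hz
      rcases eq_or_lt_of_le hlen with heq | hlt
      · rw [hmu_eq, heq, hf.1, hftil.1, sub_self]
      · rw [hmu_eq, hcol n mu.len hlt hsmall, sub_self]
    · refine (Mdeg_smul _ (Mdeg_spF mu)).mono ?_
      have hsize : mu.size = mu.len := by
        conv_lhs => rw [hmu_eq]
        rw [size_colP]
      omega

lemma Sdeg_sFcol (hf : IsSpTriangular f m) (hftil : IsSpTriangular ftil mtil)
    (hcol : ∀ i j : ℕ, j < i → i - j < d → m (colP i) (colP j) = mtil (colP i) (colP j))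
    (n : ℕ) : Sdeg f ftil d (n:ℤ) (sF (colP n)) := by
  refine ⟨?_, ?_, ?_, Mdeg_diff_col hf hftil hcol n⟩
  · have := Mdeg_sF (colP n); rwa [size_colP] at this
  · have := Mdeg_f_sF hf (colP n); rwa [size_colP] at this
  · have := Mdeg_f_sF hftil (colP n); rwa [size_colP] at this

lemma Sdeg_X (hf : IsSpTriangular f m) (hftil : IsSpTriangular ftil mtil)
    (hcol : ∀ i j : ℕ, j < i → i - j < d → m (colP i) (colP j) = mtil (colP i) (colP j)) :
    ∀ n : ℕ, Sdeg f ftil d ((n:ℤ)+1) (X n) := by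
  have hE : ∀ k : ℕ, Sdeg f ftil d (k:ℤ) (Tdet hg k) := by
    intro k
    have := Sdeg_sFcol hf hftil hcol k
    rwa [sFcol_eq] at this
  intro n
  induction n using Nat.strong_induction_on with
  | _ n ih =>
  have hexp := Tdet_expand n hg
  rw [Finset.sum_range_succ] at hexp
  have hXn : (X n : Lam) = ((-1:ℝ)^n) •
      (Tdet hg (n+1) - ∑ k ∈ Finset.range n, ((-1:ℝ)^k) • (X k * Tdet hg (n - k))) := by
    rw [hexp]
    rw [Nat.sub_self, Tdet_zero, hg_eq, mul_one]
    have hsum : ∑ k ∈ Finset.range n, ((-1:ℝ)^k) • (hg k * Tdet hg (n - k))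
        = ∑ k ∈ Finset.range n, ((-1:ℝ)^k) • ((X k : Lam) * Tdet hg (n - k)) :=
      Finset.sum_congr rfl (fun k _ => by rw [hg_eq])
    rw [hsum, add_sub_cancel_left, smul_smul, ← pow_add,
      Even.neg_one_pow ⟨n, rfl⟩, one_smul]
  rw [hXn]
  apply Sdeg_smulS
  refine Sdeg_sub (Sdeg_mono (by push_cast; omega) (hE (n+1))) ?_
  apply Sdeg_sum
  intro k hk
  have hklt := Finset.mem_range.1 hk
  apply Sdeg_smulS
  refine Sdeg_mono ?_ (Sdeg_mul (ih k hklt) (hE (n-k)))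
  have : ((n - k : ℕ) : ℤ) = (n : ℤ) - k := by omega
  omega

lemma Sdeg_monoOne (hX : ∀ n : ℕ, Sdeg f ftil d ((n:ℤ)+1) (X n)) (v : ℕ →₀ ℕ) :
    Sdeg f ftil d (W v) (monomial v 1) := by
  classical
  rw [MvPolynomial.monomial_eq, map_one, one_mul, Finsupp.prod]
  have hW : ((W v : ℕ) : ℤ) = ∑ n ∈ v.support, ((n:ℤ)+1) * (v n) := by
    rw [W, Finsupp.sum]
    push_cast
    exact Finset.sum_congr rfl (fun n _ => by push_cast; ring)
  rw [hW]
  -- product closure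
  induction v.support using Finset.induction_on with
  | empty => simpa using Sdeg_one (le_refl 0)
  | insert a s hni ih =>
      rw [Finset.prod_insert hni, Finset.sum_insert hni]
      exact Sdeg_mul (Sdeg_pow (by positivity : (0:ℤ) ≤ (a:ℤ)+1) (hX a) (v a)) ih

lemma main_bound (hf : IsSpTriangular f m) (hftil : IsSpTriangular ftil mtil)
    (hcol : ∀ i j : ℕ, j < i → i - j < d → m (colP i) (colP j) = mtil (colP i) (colP j))
    {n : ℤ} {P : Lam} (hP : Mdeg n P) :
    Mdeg (n - d) (f P - ftil P) := by
  have hX := Sdeg_X hf hftil hcol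
  have hS : Sdeg f ftil d n P := by
    rw [MvPolynomial.as_sum P]
    apply Sdeg_sum
    intro v hv
    have h1 : (monomial v) (coeff v P) = (coeff v P) • monomial v 1 := by
      rw [MvPolynomial.smul_monomial, smul_eq_mul, mul_one]
    rw [h1]
    exact Sdeg_smulS _ (Sdeg_mono (by exact_mod_cast hP v hv) (Sdeg_monoOne hX v))
  exact hS.2.2.2

end alg


-- ### Section 8 : final assembly helpers
lemma dle_trans {a b c : Ptn} (h1 : a.dle b) (h2 : b.dle c) : a.dle c :=
  fun k => (h1 k).trans (h2 k)

lemma prefix_le_size (nu : Ptn) (t : ℕ) : ∑ i ∈ Finset.range t, nu.parts i ≤ nu.size := by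
  rw [size_eq_sum nu (le_max_left nu.len t)]
  exact Finset.sum_le_sum_of_subset (by intro x hx; simp at *; omega)

def measP (L : ℕ) (nu : Ptn) : ℕ := ∑ t ∈ Finset.range (L+2), ∑ i ∈ Finset.range t, nu.parts i

lemma measP_le {L : ℕ} {nu : Ptn} (h : nu.size ≤ L) : measP L nu ≤ (L+2)*L := by
  calc measP L nu ≤ ∑ _t ∈ Finset.range (L+2), L :=
    Finset.sum_le_sum (fun t _ => (prefix_le_size nu t).trans h)
  _ = (L+2)*L := by rw [Finset.sum_const, Finset.card_range, smul_eq_mul]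

lemma meas_lt {L : ℕ} {a b : Ptn} (hdom : a.dle b) (hne : a ≠ b)
    (ha : a.size ≤ L) (hb : b.size ≤ L) : measP L a < measP L b := by
  have hle : ∀ t ∈ Finset.range (L+2),
      ∑ i ∈ Finset.range t, a.parts i ≤ ∑ i ∈ Finset.range t, b.parts i := fun t _ => hdom t
  have hmle : measP L a ≤ measP L b := Finset.sum_le_sum hle
  rcases lt_or_eq_of_le hmle with h | h
  · exact h
  · exfalso
    have hterm := (Finset.sum_eq_sum_iff_of_le hle).1 h
    apply hne
    apply Ptn.ext'
    funext i
    rcases le_or_gt i L with hiL | hiL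
    · have h1 := hterm (i+1) (Finset.mem_range.2 (by omega))
      have h2 := hterm i (Finset.mem_range.2 (by omega))
      rw [Finset.sum_range_succ, Finset.sum_range_succ] at h1
      omega
    · rw [parts_zero_of_len_le a (by have := (len_le_size a).trans ha; omega),
        parts_zero_of_len_le b (by have := (len_le_size b).trans hb; omega)]

end S7
end

open S7 MvPolynomial

/-- If the coefficient families of two sp-triangular homomorphisms agree on
all pairs of columns `((1^i), (1^j))` with `0 ≤ i - j < d`, then they agree on every pair
`μ ≤ λ` with `|λ| - |μ| < d`. -/
theorem statement7 (d : ℕ) (hd : 1 ≤ d)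
    (f ftil : Lam →ₐ[ℝ] Lam) (m mtil : Ptn → Ptn → ℝ)
    (hf : IsSpTriangular f m) (hftil : IsSpTriangular ftil mtil)
    (h : ∀ i j : ℕ, j < i → i - j < d → m (colP i) (colP j) = mtil (colP i) (colP j)) :
    ∀ lam mu : Ptn, mu.dle lam → lam.size - mu.size < d → m lam mu = mtil lam mu := by
  classical
  intro lam mu hdle hsz
  set L := lam.size with hL
  set C := (L+2)*L+1 with hC
  set T := (finite_dle lam).toFinset with hT
  set c : Ptn → ℝ := fun nu => m lam nu - mtil lam nu with hc
  have hDdeg : Mdeg ((L : ℤ) - d) (f (sF lam) - ftil (sF lam)) :=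
    main_bound hf hftil h (Mdeg_sF lam)
  have hsupp1 : (Function.support fun nu => m lam nu • spF nu) ⊆ ↑T := by
    intro nu hnu
    simp only [hT, Set.Finite.coe_toFinset]
    by_contra hnd
    apply hnu
    have hz : m lam nu = 0 := by
      by_contra hz2; exact hnd (hf.2.1 _ _ hz2)
    simp [hz]
  have hsupp2 : (Function.support fun nu => mtil lam nu • spF nu) ⊆ ↑T := by
    intro nu hnu
    simp only [hT, Set.Finite.coe_toFinset]
    by_contra hnd
    apply hnu
    have hz : mtil lam nu = 0 := by
      by_contra hz2; exact hnd (hftil.2.1 _ _ hz2)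
    simp [hz]
  have hDval : f (sF lam) - ftil (sF lam) = ∑ nu ∈ T, c nu • spF nu := by
    rw [hf.2.2 lam, hftil.2.2 lam,
      finsum_eq_finset_sum_of_support_subset _ hsupp1,
      finsum_eq_finset_sum_of_support_subset _ hsupp2,
      ← Finset.sum_sub_distrib]
    exact Finset.sum_congr rfl (fun nu _ => by rw [hc, sub_smul])
  have key : ∀ K : ℕ, ∀ nu : Ptn, nu.dle lam → ((L:ℤ) - d < nu.size) →
      ((L - nu.size) * C + measP L nu ≤ K) → c nu = 0 := by
    intro K
    induction K using Nat.strong_induction_on with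
    | _ K ih =>
    intro nu hnud hnsz hkey
    have hnuL : nu.size ≤ L := size_le_of_dle hnud
    have hWn : ((L:ℤ) - d) < (W (monoOf nu) : ℤ) := by rw [W_monoOf]; exact hnsz
    have hco : coeff (monoOf nu) (f (sF lam) - ftil (sF lam)) = 0 :=
      coeff_eq_zero_of_Mdeg hDdeg hWn
    rw [hDval, MvPolynomial.coeff_sum] at hco
    have hmemnu : nu ∈ T := by
      simp only [hT, Set.Finite.mem_toFinset]
      exact hnud
    rw [Finset.sum_eq_single_of_mem nu hmemnu ?hother] at hco
    · rw [MvPolynomial.coeff_smul, coeff_spF_eq_sF (le_refl nu.size),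
        coeff_sF_diag, smul_eq_mul, mul_one] at hco
      exact hco
    case hother =>
      intro nu' hmem' hne
      rw [MvPolynomial.coeff_smul, smul_eq_mul]
      have hnu'dle : nu'.dle lam := by
        have := hmem'
        simp only [hT, Set.Finite.mem_toFinset] at this
        exact this
      have hnu'L : nu'.size ≤ L := size_le_of_dle hnu'dle
      rcases lt_trichotomy nu'.size nu.size with hlt | heq | hgt
      · rw [coeff_spF_small hlt, mul_zero]
      · by_cases hz : coeff (monoOf nu) (sF nu') = 0
        · rw [coeff_spF_eq_sF (le_of_eq heq), hz, mul_zero]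
        · have hdom : nu'.dle nu := coeff_sF_dominance heq hz
          have hmeas : measP L nu' < measP L nu := meas_lt hdom hne hnu'L hnuL
          have hsame : (L - nu'.size) * C = (L - nu.size) * C := by rw [heq]
          have hcz : c nu' = 0 := by
            refine ih ((L - nu'.size) * C + measP L nu') (by omega) nu' hnu'dle
              (by omega) (le_refl _)
          rw [hcz, zero_mul]
      · have hstep : (L - nu'.size) + 1 ≤ L - nu.size := by omega
        have hmul : ((L - nu'.size) + 1) * C ≤ (L - nu.size) * C :=
          Nat.mul_le_mul_right C hstep
        rw [add_mul, one_mul] at hmul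
        have hmeas' : measP L nu' ≤ (L+2)*L := measP_le hnu'L
        have hcz : c nu' = 0 := by
          refine ih ((L - nu'.size) * C + measP L nu') (by omega) nu' hnu'dle
            (by omega) (le_refl _)
        rw [hcz, zero_mul]
  have hmuL : mu.size ≤ L := size_le_of_dle hdle
  have hfinal := key ((L - mu.size) * C + measP L mu) mu hdle (by omega) (le_refl _)
  have : m lam mu - mtil lam mu = 0 := hfinal
  linarith
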